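/- arXiv:0910.5350 — 9 statements merged into one kernel-verified Lean document; each statement's English description precedes it below -/
import Mathlib

section
/- Let Q ≥ 8 be even, θ₀ = 2π/Q, ω = 2cos θ₀, and let l+1 = φ(Q)/2 where φ is Euler's totient. For every k = k_m in the quasilattice Γ (m ∈ ℕ^Q), there exist integers q₀, q₁, …, q_l (depending on m, with q₀+1 and each q_j integer-valued quadratic forms in m) such that |k_m|² - 1 = q₀ + ω q₁ + … + ω^l q_l. -/
open Polynomial Finset IntermediateField

/-- The `j`-th unit wavevector `k_{j+1} = (cos(2πj/Q), sin(2πj/Q))`, identified with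
the complex number `e^{2πij/Q}`. -/
noncomputable def kvec (Q : ℕ) (j : ℕ) : ℂ :=
  Complex.exp (2 * Real.pi * Complex.I * j / Q)

/-- The quasilattice Γ: all combinations `Σ_j m_j k_j` with `m ∈ ℕ^Q`. -/
def Qlattice (Q : ℕ) : Set ℂ :=
  {k | ∃ m : ℕ → ℕ, k = ∑ j ∈ Finset.range Q, (m j : ℂ) * kvec Q j}

/-- The order `N_k`: the minimal total number of generators needed to write `k`. -/
noncomputable def Nord (Q : ℕ) (k : ℂ) : ℕ :=
  sInf {n | ∃ m : ℕ → ℕ, (∑ j ∈ Finset.range Q, m j) = n ∧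
    k = ∑ j ∈ Finset.range Q, (m j : ℂ) * kvec Q j}

lemma sq_sum_split {M : Type*} [AddCommMonoid M] (n : ℕ) (g : ℕ → ℕ → M) :
    ∑ j ∈ range n, ∑ j' ∈ range n, g j j' =
      (∑ j ∈ range n, g j j) +
        ∑ j ∈ range n, ∑ j' ∈ range j, (g j j' + g j' j) := by
  induction n with
  | zero => simp
  | succ n ih =>
    rw [Finset.sum_range_succ]
    simp only [Finset.sum_range_succ (fun j' => g _ j')]
    rw [Finset.sum_add_distrib, ih,
      Finset.sum_range_succ (fun j => ∑ j' ∈ range j, (g j j' + g j' j)),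
      Finset.sum_add_distrib]
    abel

/-- The degree bound: the minimal polynomial of `ζ + ζ⁻¹` over `ℤ`, where
`ζ = e^{2πi/Q}`, has degree at most `φ(Q)/2`. -/
lemma minpoly_deg_le (Q : ℕ) (hQ : 8 ≤ Q) :
    (minpoly ℤ (Complex.exp (2 * Real.pi * Complex.I / Q) +
      (Complex.exp (2 * Real.pi * Complex.I / Q))⁻¹)).natDegree ≤ Q.totient / 2 := by
  set ζ : ℂ := Complex.exp (2 * Real.pi * Complex.I / Q) with hζdef
  have hζ0 : ζ ≠ 0 := Complex.exp_ne_zero _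
  have hprim : IsPrimitiveRoot ζ Q := Complex.isPrimitiveRoot_exp Q (by omega)
  have hζintZ : IsIntegral ℤ ζ := hprim.isIntegral (by omega)
  have hζQ1 : ζ ^ Q = 1 := hprim.pow_eq_one
  have hζinv_eq : ζ⁻¹ = ζ ^ (Q - 1) := by
    apply inv_eq_of_mul_eq_one_right
    calc ζ * ζ ^ (Q - 1) = ζ ^ (Q - 1 + 1) := by rw [pow_succ]; ring
    _ = 1 := by rw [Nat.sub_add_cancel (by omega), hζQ1]
  have hinvintZ : IsIntegral ℤ (ζ⁻¹) := hζinv_eq ▸ hζintZ.pow _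
  have hωintZ : IsIntegral ℤ (ζ + ζ⁻¹) := hζintZ.add hinvintZ
  have hωintQ : IsIntegral ℚ (ζ + ζ⁻¹) := hωintZ.tower_top
  have hζintQ : IsIntegral ℚ ζ := hζintZ.tower_top
  have hμmonic : (minpoly ℤ (ζ + ζ⁻¹)).Monic := minpoly.monic hωintZ
  have hdQ : (minpoly ℚ (ζ + ζ⁻¹)).natDegree = (minpoly ℤ (ζ + ζ⁻¹)).natDegree := by
    rw [minpoly.isIntegrallyClosed_eq_field_fractions' ℚ hωintZ, hμmonic.natDegree_map]
  rw [← hdQ]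
  -- work inside L = ℚ(ζ)
  set L : IntermediateField ℚ ℂ := ℚ⟮ζ⟯ with hLdef
  haveI : FiniteDimensional ℚ L := IntermediateField.adjoin.finiteDimensional hζintQ
  have hLrank : Module.finrank ℚ L = Q.totient := by
    rw [IntermediateField.adjoin.finrank hζintQ,
      ← Polynomial.cyclotomic_eq_minpoly_rat hprim (by omega), Polynomial.natDegree_cyclotomic]
  set ζ' : L := IntermediateField.AdjoinSimple.gen ℚ ζ with hζ'def
  set x : L := ζ' + ζ'⁻¹ with hxdef
  have hvalζ' : L.val ζ' = ζ := rfl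
  have hxval : L.val x = ζ + ζ⁻¹ := by
    rw [hxdef, map_add, map_inv₀, hvalζ']
  have hminx : minpoly ℚ (ζ + ζ⁻¹) = minpoly ℚ x := by
    rw [← hxval]
    exact minpoly.algHom_eq L.val Subtype.val_injective x
  rw [hminx]
  have hxint : IsIntegral ℚ x := IsIntegral.of_finite ℚ x
  obtain ⟨c, hc⟩ := minpoly.degree_dvd hxint
  rw [hLrank] at hc
  -- the "real" intermediate field of L
  have hratmem : ∀ q : ℚ, algebraMap ℚ L q ∈
      (Complex.ofRealHom.fieldRange.comap (algebraMap L ℂ)) := by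
    intro q
    refine ⟨(q : ℝ), ?_⟩
    simp [Complex.ofRealHom_eq_coe]
  set T : IntermediateField ℚ L :=
    Subfield.toIntermediateField (Complex.ofRealHom.fieldRange.comap (algebraMap L ℂ)) hratmem
    with hTdef
  have hexp1 : Complex.exp ((2 * (Real.pi:ℂ) / Q) * Complex.I) = ζ := by
    rw [hζdef]; congr 1; ring
  have hxT : x ∈ T := by
    refine ⟨(2 * Real.cos (2 * Real.pi / Q) : ℝ), ?_⟩
    show ((2 * Real.cos (2 * Real.pi / Q) : ℝ) : ℂ) = L.val x
    rw [hxval]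
    push_cast
    rw [Complex.two_cos, neg_mul, Complex.exp_neg, hexp1]
  have hζnotT : ζ' ∉ T := by
    intro hmem
    obtain ⟨r, hr⟩ := hmem
    have him : (ζ : ℂ).im = 0 := by
      rw [show (algebraMap L ℂ) ζ' = ζ from rfl] at hr
      rw [← hr]
      exact Complex.ofReal_im r
    have harg : (2 * (Real.pi : ℂ) * Complex.I / Q) = ((2 * Real.pi / Q : ℝ) : ℂ) * Complex.I := by
      push_cast; ring
    rw [hζdef, harg, Complex.exp_ofReal_mul_I_im] at him
    have hQpos : (0 : ℝ) < Q := by positivity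
    have h1 : 0 < 2 * Real.pi / Q := by positivity
    have h8 : (8:ℝ) ≤ Q := by exact_mod_cast hQ
    have hmul : Real.pi * 8 ≤ Real.pi * Q :=
      mul_le_mul_of_nonneg_left h8 (le_of_lt Real.pi_pos)
    have h2 : 2 * Real.pi / Q < Real.pi := by
      rw [div_lt_iff₀ (by positivity)]
      nlinarith [Real.pi_pos]
    exact (Real.sin_pos_of_pos_of_lt_pi h1 h2).ne' him
  have hne_top : ℚ⟮x⟯ ≠ (⊤ : IntermediateField ℚ L) := by
    intro htop
    apply hζnotT
    have : ζ' ∈ ℚ⟮x⟯ := htop ▸ IntermediateField.mem_top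
    exact IntermediateField.adjoin_le_iff.2 (Set.singleton_subset_iff.2 hxT) this
  have hcge2 : 2 ≤ c := by
    rcases Nat.lt_or_ge c 2 with hc2 | hc2
    · interval_cases c
      · rw [mul_zero] at hc
        exact absurd hc.symm (Nat.totient_pos.2 (by omega)).ne
      · rw [mul_one] at hc
        exfalso
        apply hne_top
        apply IntermediateField.eq_of_le_of_finrank_eq le_top
        rw [IntermediateField.adjoin.finrank hxint, IntermediateField.finrank_top', hLrank, hc]
    · exact hc2
  have : (minpoly ℚ x).natDegree * 2 ≤ Q.totient := by
    calc (minpoly ℚ x).natDegree * 2 ≤ (minpoly ℚ x).natDegree * c :=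
      Nat.mul_le_mul_left _ hcge2
    _ = Q.totient := hc.symm
  exact (Nat.le_div_iff_mul_le (by omega)).2 this

/-- with ω = 2cos(2π/Q) and l + 1 = φ(Q)/2, for every m ∈ ℕ^Q there
are integers q₀,…,q_l with |k_m|² - 1 = q₀ + ωq₁ + … + ω^l q_l. -/
theorem stmt_7 (Q : ℕ) (hQ : 8 ≤ Q) (hQeven : Even Q)
    (l : ℕ) (hl : l + 1 = Nat.totient Q / 2) (m : ℕ → ℕ) :
    ∃ q : Fin (l + 1) → ℤ,
      ‖∑ j ∈ Finset.range Q, (m j : ℂ) * kvec Q j‖ ^ 2 - 1 =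
        ∑ j : Fin (l + 1), (q j : ℝ) * (2 * Real.cos (2 * Real.pi / Q)) ^ (j : ℕ) := by
  have hQne : Q ≠ 0 := by omega
  set ζ : ℂ := Complex.exp (2 * Real.pi * Complex.I / Q) with hζdef
  have hζ0 : ζ ≠ 0 := Complex.exp_ne_zero _
  have hζinv : ζ * ζ⁻¹ = 1 := mul_inv_cancel₀ hζ0
  have hprim : IsPrimitiveRoot ζ Q := Complex.isPrimitiveRoot_exp Q hQne
  have hζintZ : IsIntegral ℤ ζ := hprim.isIntegral (by omega)
  have hζQ1 : ζ ^ Q = 1 := hprim.pow_eq_one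
  have hζinv_eq : ζ⁻¹ = ζ ^ (Q - 1) := by
    apply inv_eq_of_mul_eq_one_right
    calc ζ * ζ ^ (Q - 1) = ζ ^ (Q - 1 + 1) := by rw [pow_succ]; ring
    _ = 1 := by rw [Nat.sub_add_cancel (by omega), hζQ1]
  have hinvintZ : IsIntegral ℤ (ζ⁻¹) := hζinv_eq ▸ hζintZ.pow _
  have hωintZ : IsIntegral ℤ (ζ + ζ⁻¹) := hζintZ.add hinvintZ
  set μ : Polynomial ℤ := minpoly ℤ (ζ + ζ⁻¹) with hμdef
  have hμmonic : μ.Monic := minpoly.monic hωintZ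
  have hμdeg : μ.natDegree ≤ l + 1 := by
    have := minpoly_deg_le Q hQ
    rw [← hζdef, ← hμdef] at this
    omega
  have hexp1 : Complex.exp ((2 * (Real.pi:ℂ) / Q) * Complex.I) = ζ := by
    rw [hζdef]; congr 1; ring
  have hωζ : ((2 * Real.cos (2 * Real.pi / Q) : ℝ) : ℂ) = ζ + ζ⁻¹ := by
    push_cast
    rw [Complex.two_cos, neg_mul, Complex.exp_neg, hexp1]
  have hμω : Polynomial.aeval (2 * Real.cos (2 * Real.pi / Q)) μ = 0 := by
    have h : (algebraMap ℝ ℂ) (Polynomial.aeval (2 * Real.cos (2 * Real.pi / Q)) μ) = 0 := by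
      rw [← Polynomial.aeval_algebraMap_apply,
        show (algebraMap ℝ ℂ) (2 * Real.cos (2 * Real.pi / Q)) = ζ + ζ⁻¹ from hωζ]
      exact minpoly.aeval ℤ _
    apply Complex.ofReal_injective
    rw [Complex.ofReal_zero, ← Complex.coe_algebraMap]
    exact h
  -- the generators as powers of ζ
  have hkvec : ∀ j : ℕ, kvec Q j = ζ ^ j := by
    intro j
    rw [hζdef, ← Complex.exp_nat_mul]
    unfold kvec
    congr 1
    push_cast
    ring
  have hconj : ∀ j : ℕ, (starRingEnd ℂ) (kvec Q j) = (ζ⁻¹) ^ j := by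
    intro j
    rw [hkvec, map_pow]
    congr 1
    rw [hζdef, ← Complex.exp_conj, ← Complex.exp_neg]
    congr 1
    simp only [map_div₀, map_mul, Complex.conj_I, Complex.conj_ofReal, map_ofNat,
      Complex.conj_natCast]
    ring
  set z : ℂ := ∑ j ∈ Finset.range Q, (m j : ℂ) * kvec Q j with hzdef
  have hzz : z = ∑ j ∈ range Q, (m j : ℂ) * ζ ^ j :=
    Finset.sum_congr rfl fun j _ => by rw [hkvec]
  have hzbar : (starRingEnd ℂ) z = ∑ j ∈ range Q, (m j : ℂ) * (ζ⁻¹) ^ j := by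
    rw [hzdef, map_sum]
    exact Finset.sum_congr rfl fun j _ => by rw [map_mul, hconj j, Complex.conj_natCast]
  have hpow : ∀ a b : ℕ, b ≤ a → ζ ^ a * (ζ⁻¹) ^ b = ζ ^ (a - b) := by
    intro a b h
    conv_lhs => rw [show a = (a - b) + b from (Nat.sub_add_cancel h).symm]
    rw [pow_add, mul_assoc, ← mul_pow, hζinv, one_pow, mul_one]
  have hpow' : ∀ a b : ℕ, b ≤ a → ζ ^ b * (ζ⁻¹) ^ a = (ζ⁻¹) ^ (a - b) := by
    intro a b h
    conv_lhs => rw [show a = (a - b) + b from (Nat.sub_add_cancel h).symm]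
    rw [pow_add, ← mul_assoc, mul_comm (ζ ^ b), mul_assoc, ← mul_pow, hζinv, one_pow, mul_one]
  have hdick : ∀ n : ℕ, Polynomial.aeval (ζ + ζ⁻¹) (dickson 1 (1:ℤ) n) = ζ ^ n + (ζ⁻¹) ^ n := by
    intro n
    rw [Polynomial.aeval_def, Polynomial.eval₂_eq_eval_map, Polynomial.map_dickson]
    simpa using Polynomial.dickson_one_one_eval_add_inv ζ ζ⁻¹ hζinv n
  set P : Polynomial ℤ := Polynomial.C ((∑ j ∈ range Q, (m j : ℤ) ^ 2) - 1) +
      ∑ j ∈ range Q, ∑ j' ∈ range j,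
        Polynomial.C ((m j : ℤ) * (m j' : ℤ)) * dickson 1 (1:ℤ) (j - j') with hPdef
  have hmulconj : z * (starRingEnd ℂ) z = (∑ j ∈ range Q, (m j : ℂ) ^ 2) +
      ∑ j ∈ range Q, ∑ j' ∈ range j,
        (m j : ℂ) * (m j' : ℂ) * (ζ ^ (j - j') + (ζ⁻¹) ^ (j - j')) := by
    rw [hzbar, hzz, Finset.sum_mul_sum,
      sq_sum_split Q (fun j j' => ((m j : ℂ) * ζ ^ j) * ((m j' : ℂ) * (ζ⁻¹) ^ j'))]
    congr 1
    · exact Finset.sum_congr rfl fun j _ => by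
        rw [mul_mul_mul_comm, ← mul_pow, hζinv, one_pow, mul_one, sq]
    · refine Finset.sum_congr rfl fun j _ => Finset.sum_congr rfl fun j' hj' => ?_
      have hle : j' ≤ j := le_of_lt (Finset.mem_range.1 hj')
      have e1 : ((m j : ℂ) * ζ ^ j) * ((m j' : ℂ) * (ζ⁻¹) ^ j')
          = (m j : ℂ) * (m j' : ℂ) * ζ ^ (j - j') := by
        rw [mul_mul_mul_comm, hpow j j' hle]
      have e2 : ((m j' : ℂ) * ζ ^ j') * ((m j : ℂ) * (ζ⁻¹) ^ j)
          = (m j : ℂ) * (m j' : ℂ) * (ζ⁻¹) ^ (j - j') := by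
        rw [mul_mul_mul_comm, hpow' j j' hle]; ring
      rw [e1, e2]; ring
  have hPeval : Polynomial.aeval (ζ + ζ⁻¹) P = ((∑ j ∈ range Q, (m j : ℂ) ^ 2) - 1) +
      ∑ j ∈ range Q, ∑ j' ∈ range j,
        (m j : ℂ) * (m j' : ℂ) * (ζ ^ (j - j') + (ζ⁻¹) ^ (j - j')) := by
    rw [hPdef, map_add, Polynomial.aeval_C]
    congr 1
    · simp only [algebraMap_int_eq, eq_intCast]
      push_cast
      ring
    · rw [map_sum]
      refine Finset.sum_congr rfl fun j _ => ?_
      rw [map_sum]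
      refine Finset.sum_congr rfl fun j' _ => ?_
      rw [map_mul, Polynomial.aeval_C, hdick]
      simp only [algebraMap_int_eq, eq_intCast]
      push_cast
      ring
  have hPω : Polynomial.aeval (2 * Real.cos (2 * Real.pi / Q)) P
      = ‖z‖ ^ 2 - 1 := by
    apply Complex.ofReal_injective
    have lhs : ((Polynomial.aeval (2 * Real.cos (2 * Real.pi / Q)) P : ℝ) : ℂ)
        = Polynomial.aeval ((ζ + ζ⁻¹ : ℂ)) P := by
      rw [show ((Polynomial.aeval (2 * Real.cos (2 * Real.pi / Q)) P : ℝ) : ℂ)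
          = (algebraMap ℝ ℂ) (Polynomial.aeval (2 * Real.cos (2 * Real.pi / Q)) P) from rfl,
        ← Polynomial.aeval_algebraMap_apply,
        show (algebraMap ℝ ℂ) (2 * Real.cos (2 * Real.pi / Q)) = ζ + ζ⁻¹ from hωζ]
    rw [lhs, hPeval]
    have rhs : ((‖z‖ ^ 2 - 1 : ℝ) : ℂ) = z * (starRingEnd ℂ) z - 1 := by
      push_cast
      rw [show ((‖z‖ : ℂ) ^ 2 : ℂ) = ((‖z‖ ^ 2 : ℝ) : ℂ) by push_cast; ring,
        Complex.sq_norm, ← Complex.mul_conj]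
    rw [rhs, hmulconj]
    ring
  -- reduce P mod μ
  set r : Polynomial ℤ := P %ₘ μ with hrdef
  have hr : Polynomial.aeval (2 * Real.cos (2 * Real.pi / Q)) P
      = Polynomial.aeval (2 * Real.cos (2 * Real.pi / Q)) r := by
    conv_lhs => rw [← Polynomial.modByMonic_add_div P μ]
    rw [map_add, map_mul, hμω, zero_mul, add_zero]
  have hrdeg : r.natDegree < l + 1 := by
    rcases eq_or_ne r 0 with h0 | h0
    · rw [h0, Polynomial.natDegree_zero]; omega
    · have h1 : r.degree < μ.degree := Polynomial.degree_modByMonic_lt P hμmonic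
      have h2 := Polynomial.natDegree_lt_natDegree h0 h1
      omega
  refine ⟨fun i => r.coeff i, ?_⟩
  have hfin : ‖z‖ ^ 2 - 1 = ∑ i ∈ range (l + 1),
      ((r.coeff i : ℤ) : ℝ) * (2 * Real.cos (2 * Real.pi / Q)) ^ i := by
    rw [← hPω, hr, Polynomial.aeval_eq_sum_range' hrdeg]
    exact Finset.sum_congr rfl fun i _ => by rw [zsmul_eq_mul]
  rw [hfin]
  exact (Fin.sum_univ_eq_sum_range
    (fun i => ((r.coeff i : ℤ) : ℝ) * (2 * Real.cos (2 * Real.pi / Q)) ^ i) (l + 1)).symm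
end

section
/- Let Q ≥ 8 be even and let Γ be the quasilattice generated by the Q unit vectors k_j equally spaced on the unit circle. If k ∈ Γ satisfies |k| = 1, then k = k_j for some j ∈ {1,…,Q}. -/
open IntermediateField

lemma aux_abs_one {w : ℂ} {n : ℕ} (hn : n ≠ 0) (h : w ^ n = 1) : ‖w‖ = 1 := by
  have h1 : ‖w‖ ^ n = 1 := by rw [← norm_pow, h, norm_one]
  by_contra hne
  rcases lt_or_gt_of_ne hne with hlt | hgt
  · have := pow_lt_one₀ (norm_nonneg w) hlt hn
    rw [h1] at this; exact lt_irrefl 1 this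
  · have := one_lt_pow₀ hgt hn
    rw [h1] at this; exact lt_irrefl 1 this

lemma aux_conj_pow {w : ℂ} {Q : ℕ} (hQ : Q ≠ 0) (hw : w ^ Q = 1) {j : ℕ} (hj : j ≤ Q) :
    (starRingEnd ℂ) (w ^ j) = w ^ (Q - j) := by
  have habs : ‖w ^ j‖ = 1 := by rw [norm_pow, aux_abs_one hQ hw, one_pow]
  have h2 : w ^ j * (starRingEnd ℂ) (w ^ j) = 1 := by
    rw [Complex.mul_conj, Complex.normSq_eq_norm_sq, habs]; norm_num
  have h1 : w ^ j * w ^ (Q - j) = 1 := by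
    rw [← pow_add, Nat.add_sub_cancel' hj, hw]
  rw [← inv_eq_of_mul_eq_one_right h2, inv_eq_of_mul_eq_one_right h1]

lemma aux_totient {Q L : ℕ} (hQe : Even Q) (hQ0 : 0 < Q) (hd : Q ∣ L) (hL0 : 0 < L)
    (hle : Nat.totient L ≤ Nat.totient Q) : L = Q := by
  by_contra hne
  obtain ⟨c, hc⟩ := hd
  have hc0 : c ≠ 0 := by rintro rfl; simp at hc; omega
  have hc1 : c ≠ 1 := by rintro rfl; simp at hc; exact hne hc
  obtain ⟨p, hp, hpc⟩ := Nat.exists_prime_and_dvd hc1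
  obtain ⟨d, hd'⟩ := hpc
  have hd0 : d ≠ 0 := by rintro rfl; simp at hd'; exact hc0 hd'
  have hL : L = p * (Q * d) := by rw [hc, hd']; ring
  have hM0 : 0 < Q * d := by positivity
  have htQ : Nat.totient Q ≤ Nat.totient (Q * d) :=
    Nat.le_of_dvd (Nat.totient_pos.mpr hM0) (Nat.totient_dvd_of_dvd ⟨d, rfl⟩)
  have htM0 : 0 < Nat.totient (Q * d) := Nat.totient_pos.mpr hM0
  have hbig : 2 * Nat.totient (Q * d) ≤ Nat.totient L := by
    by_cases hpM : p ∣ Q * d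
    · rw [hL, Nat.totient_mul_of_prime_of_dvd hp hpM]
      have := hp.two_le; nlinarith
    · have hco : Nat.Coprime p (Q * d) := (Nat.Prime.coprime_iff_not_dvd hp).mpr hpM
      rw [hL, Nat.totient_mul hco, Nat.totient_prime hp]
      have hp2 : p ≠ 2 := by
        rintro rfl
        exact hpM (Dvd.dvd.mul_right hQe.two_dvd d)
      have h3 : 2 ≤ p - 1 := by have := hp.two_le; omega
      exact Nat.mul_le_mul_right _ h3
  omega

/-- the only points of Γ on the unit circle are the Q generators. -/
theorem stmt_8 (Q : ℕ) (hQ : 8 ≤ Q) (hQeven : Even Q)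
    (k : ℂ) (hk : k ∈ Qlattice Q) (h1 : ‖k‖ = 1) :
    ∃ j < Q, k = kvec Q j := by
  have hQ0 : Q ≠ 0 := by omega
  haveI : NeZero Q := ⟨hQ0⟩
  obtain ⟨m, hm⟩ := hk
  set ζ : ℂ := Complex.exp (2 * Real.pi * Complex.I / Q) with hζdef
  have hζprim : IsPrimitiveRoot ζ Q := Complex.isPrimitiveRoot_exp Q hQ0
  have hkvec : ∀ j : ℕ, kvec Q j = ζ ^ j := by
    intro j
    rw [kvec, hζdef, ← Complex.exp_nat_mul]
    congr 1
    ring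
  have hmk : k = ∑ j ∈ Finset.range Q, (m j : ℂ) * ζ ^ j := by
    rw [hm]; exact Finset.sum_congr rfl fun j _ => by rw [hkvec]
  have hζQ1 : ζ ^ Q = 1 := hζprim.pow_eq_one
  -- the number field K = ℚ(ζ)
  have hζint : IsIntegral ℤ ζ := hζprim.isIntegral (by omega)
  have hζintQ : IsIntegral ℚ ζ := hζint.tower_top
  set K : IntermediateField ℚ ℂ := ℚ⟮ζ⟯ with hKdef
  haveI : FiniteDimensional ℚ K := IntermediateField.adjoin.finiteDimensional hζintQ
  haveI : NumberField K := ⟨⟩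
  have hζmem : ζ ∈ K := IntermediateField.mem_adjoin_simple_self ℚ ζ
  set ζK : K := ⟨ζ, hζmem⟩ with hζKdef
  have hinj : Function.Injective (algebraMap K ℂ) := (algebraMap K ℂ).injective
  have hζKcoe : (algebraMap K ℂ) ζK = ζ := rfl
  have hζKQ : ζK ^ Q = 1 := by
    apply hinj
    rw [map_pow, map_one, hζKcoe, hζQ1]
  set kK : K := ∑ j ∈ Finset.range Q, (m j : K) * ζK ^ j with hkKdef
  have hkKcoe : (algebraMap K ℂ) kK = k := by
    rw [hkKdef, map_sum, hmk]
    exact Finset.sum_congr rfl fun j _ => by rw [map_mul, map_natCast, map_pow, hζKcoe]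
  have hζKint : IsIntegral ℤ ζK := by
    rw [← isIntegral_algebraMap_iff hinj, hζKcoe]; exact hζint
  have hkKint : IsIntegral ℤ kK := by
    apply IsIntegral.sum
    intro j _
    have h1 : IsIntegral ℤ (m j : K) := by
      have : ((m j : ℤ) : K) = (m j : K) := by push_cast; ring
      rw [← this]
      exact isIntegral_algebraMap
    exact h1.mul (hζKint.pow j)
  -- the conjugate element
  set cK : K := ∑ j ∈ Finset.range Q, (m j : K) * ζK ^ (Q - j) with hcKdef
  have hcKcoe : (algebraMap K ℂ) cK = (starRingEnd ℂ) k := by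
    rw [hcKdef, map_sum, hmk, map_sum]
    refine Finset.sum_congr rfl fun j hj => ?_
    rw [map_mul, map_natCast, map_mul, map_natCast, map_pow, hζKcoe,
      aux_conj_pow hQ0 hζQ1 (Finset.mem_range.mp hj).le]
  have hmul : kK * cK = 1 := by
    apply hinj
    rw [map_mul, map_one, hkKcoe, hcKcoe, Complex.mul_conj, Complex.normSq_eq_norm_sq, h1]
    norm_num
  -- all embeddings have norm 1
  have hnorm : ∀ φ : ↥K →+* ℂ, ‖φ kK‖ = 1 := by
    intro φ
    have hwQ : (φ ζK) ^ Q = 1 := by rw [← map_pow, hζKQ, map_one]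
    have hconj : (starRingEnd ℂ) (φ kK) = φ cK := by
      rw [hkKdef, hcKdef, map_sum, map_sum, map_sum]
      refine Finset.sum_congr rfl fun j hj => ?_
      simp only [map_mul, map_natCast, map_pow]
      rw [← map_pow (starRingEnd ℂ) (φ ζK) j, aux_conj_pow hQ0 hwQ (Finset.mem_range.mp hj).le]
    have hone : φ kK * (starRingEnd ℂ) (φ kK) = 1 := by
      rw [hconj, ← map_mul, hmul, map_one]
    have habs : ‖φ kK‖ = 1 := by
      rw [Complex.mul_conj, Complex.normSq_eq_norm_sq] at hone
      have : (‖φ kK‖) ^ 2 = 1 := by exact_mod_cast hone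
      nlinarith [norm_nonneg (φ kK)]
    rw [habs]
  -- Kronecker
  obtain ⟨n, hn0, hkn⟩ := NumberField.Embeddings.pow_eq_one_of_norm_eq_one K ℂ hkKint hnorm
  have hkpow : k ^ n = 1 := by
    have := congrArg (algebraMap K ℂ) hkn
    rwa [map_pow, map_one, hkKcoe] at this
  -- units and lcm of orders
  have hk0 : k ≠ 0 := by
    intro h; rw [h] at h1; simp at h1
  have hζ0 : ζ ≠ 0 := Complex.exp_ne_zero _
  set uk : ℂˣ := Units.mk0 k hk0 with hukdef
  set uζ : ℂˣ := Units.mk0 ζ hζ0 with huζdef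
  obtain ⟨z, hzmem, hzord⟩ := (Commute.all uζ uk).exists_orderOf_eq_lcm
  have hordζ : orderOf uζ = Q := by
    have : IsPrimitiveRoot uζ Q := IsPrimitiveRoot.coe_units_iff.mp hζprim
    exact this.eq_orderOf.symm
  have hukn : uk ^ n = 1 := by
    ext
    push_cast
    exact hkpow
  have hordk_pos : 0 < orderOf uk :=
    orderOf_pos_iff.mpr (isOfFinOrder_iff_pow_eq_one.mpr ⟨n, Nat.pos_of_ne_zero (by omega), hukn⟩)
  set L : ℕ := Nat.lcm Q (orderOf uk) with hLdef
  have hzordL : orderOf z = L := by rw [hzord, hordζ]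
  have hL0 : 0 < L := Nat.pos_of_ne_zero (Nat.lcm_ne_zero hQ0 hordk_pos.ne')
  have hQL : Q ∣ L := Nat.dvd_lcm_left _ _
  -- z lies in K
  have hkmem : k ∈ K := by
    rw [hmk]
    exact sum_mem fun j _ => mul_mem (_root_.natCast_mem K (m j)) (pow_mem hζmem j)
  have hzK : (z : ℂ) ∈ K := by
    refine Submonoid.closure_induction (motive := fun g _ => ((g : ℂˣ) : ℂ) ∈ K) ?_ ?_ ?_ hzmem
    · rintro x hx
      rcases hx with rfl | rfl
      · exact hζmem
      · exact hkmem
    · exact one_mem K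
    · intro x y _ _ hx hy
      rw [Units.val_mul]; exact mul_mem hx hy
  set zK : ↥K := ⟨(z : ℂ), hzK⟩ with hzKdef2
  have hzprim : IsPrimitiveRoot ((z : ℂˣ) : ℂ) L := by
    have h := IsPrimitiveRoot.orderOf (z : ℂˣ)
    rw [hzordL] at h
    exact IsPrimitiveRoot.coe_units_iff.mpr h
  have hzKprim : IsPrimitiveRoot zK L := by
    have h : IsPrimitiveRoot ((algebraMap ↥K ℂ) zK) L := hzprim
    exact h.of_map_of_injective hinj
  have hdeg : Nat.totient L ≤ Nat.totient Q := by
    have hminz : Polynomial.cyclotomic L ℚ = minpoly ℚ zK :=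
      Polynomial.cyclotomic_eq_minpoly_rat hzKprim hL0
    have h2 := minpoly.natDegree_le (A := ℚ) zK
    rw [← hminz, Polynomial.natDegree_cyclotomic] at h2
    have h3 : Module.finrank ℚ ↥K = Nat.totient Q := by
      rw [IntermediateField.adjoin.finrank hζintQ,
        ← Polynomial.cyclotomic_eq_minpoly_rat hζprim (Nat.pos_of_ne_zero hQ0),
        Polynomial.natDegree_cyclotomic]
    rw [h3] at h2
    exact h2
  have hLQ : L = Q := aux_totient hQeven (Nat.pos_of_ne_zero hQ0) hQL hL0 hdeg
  have hkQ : k ^ Q = 1 := by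
    have hdvd : orderOf uk ∣ Q := hLQ ▸ Nat.dvd_lcm_right Q (orderOf uk)
    have h := orderOf_dvd_iff_pow_eq_one.mp hdvd
    simpa [hukdef] using congrArg Units.val h
  obtain ⟨j, hj, hjk⟩ := hζprim.eq_pow_of_pow_eq_one hkQ
  exact ⟨j, hj, by rw [hkvec j, hjk]⟩
end

section
/- Let Q ≥ 8 be even and l+1 = φ(Q)/2. There exists a constant c > 0 depending only on Q such that for every k ∈ Γ with |k| ≠ 1, one has ||k|² - 1| ≥ c / N_k^{2l}. -/
open Polynomial

lemma kvec_eq_pow (Q : ℕ) (j : ℕ) :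
    kvec Q j = (Complex.exp (2 * Real.pi * Complex.I / Q)) ^ j := by
  rw [kvec, ← Complex.exp_nat_mul]
  ring_nf

lemma conj_sum_pow (Q : ℕ) (hQ : 0 < Q) (μ : ℂ) (hμ : μ ^ Q = 1) (m : ℕ → ℕ) :
    ∑ j ∈ Finset.range Q, (m j : ℂ) * μ ^ (Q - j) =
      (starRingEnd ℂ) (∑ j ∈ Finset.range Q, (m j : ℂ) * μ ^ j) := by
  have hμ0 : μ ≠ 0 := by
    intro h; rw [h, zero_pow hQ.ne'] at hμ; exact zero_ne_one hμ
  have habs : ‖μ‖ = 1 := Complex.norm_eq_one_of_pow_eq_one hμ hQ.ne'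
  rw [map_sum]
  refine Finset.sum_congr rfl fun j hj => ?_
  rw [Finset.mem_range] at hj
  have hconj : (starRingEnd ℂ) μ = μ⁻¹ := by
    rw [Complex.inv_def, Complex.normSq_eq_norm_sq, habs]
    simp
  rw [map_mul, map_natCast, map_pow, hconj, pow_sub₀ μ hμ0 hj.le, hμ, inv_pow]
  ring

lemma aux_sq (A B : ℝ) (hA : 0 ≤ A) (hB : 0 < B) (h : 1 ≤ A * A * B ^ 2) : 1 ≤ A * B := by
  nlinarith [mul_nonneg hA hB.le]

lemma aux_final (A : ℝ) (l N : ℕ) (hN : (1:ℝ) ≤ N) (hA : 0 ≤ A)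
    (hAB : 1 ≤ A * (2 * (N:ℝ) ^ 2) ^ l) : ((1:ℝ)/2) ^ l / (N : ℝ) ^ (2 * l) ≤ A := by
  have hBeq : (2*(N:ℝ)^2)^l = 2^l * (N:ℝ)^(2*l) := by rw [mul_pow, ← pow_mul]
  have hNpos : (0:ℝ) < (N:ℝ)^(2*l) := by positivity
  rw [div_pow, one_pow, div_div, div_le_iff₀ (by positivity)]
  rw [hBeq] at hAB
  nlinarith [hAB]

lemma key (Q : ℕ) (hQ : 8 ≤ Q) (l : ℕ) (hφ : Nat.totient Q = 2 * l + 2)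
    (m : ℕ → ℕ) (N : ℕ) (hmN : ∑ j ∈ Finset.range Q, m j = N) (hN1 : 1 ≤ N)
    (k : ℂ) (hrep : k = ∑ j ∈ Finset.range Q, (m j : ℂ) * kvec Q j)
    (habsk : ‖k‖ ≠ 1) :
    ((1:ℝ)/2) ^ l / (N : ℝ) ^ (2 * l) ≤ |(‖k‖) ^ 2 - 1| := by
  classical
  have hQpos : 0 < Q := by omega
  set n : ℕ+ := ⟨Q, hQpos⟩ with hn
  set K := CyclotomicField n ℚ with hK
  haveI : NeZero ((n : ℕ) : ℚ) := ⟨by exact_mod_cast hQpos.ne'⟩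
  haveI : NeZero (n : ℕ) := ⟨n.ne_zero⟩
  haveI : IsCyclotomicExtension {(n : ℕ)} ℚ K := CyclotomicField.isCyclotomicExtension _ _
  haveI : FiniteDimensional ℚ K := IsCyclotomicExtension.finiteDimensional {(n : ℕ)} ℚ K
  have hζ := IsCyclotomicExtension.zeta_spec n ℚ K
  set ζ : K := IsCyclotomicExtension.zeta n ℚ K with hζdef
  have hirr : Irreducible (cyclotomic n ℚ) := cyclotomic.irreducible_rat n.pos
  set ζℂ : ℂ := Complex.exp (2 * Real.pi * Complex.I / Q) with hζℂdef
  have hζℂ : IsPrimitiveRoot ζℂ Q := Complex.isPrimitiveRoot_exp Q hQpos.ne'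
  have hmem : ζℂ ∈ primitiveRoots n ℂ := by
    rw [mem_primitiveRoots n.pos]; exact hζℂ
  set σ₀ : K →ₐ[ℚ] ℂ := (hζ.embeddingsEquivPrimitiveRoots ℂ hirr).symm ⟨_, hmem⟩ with hσ₀def
  have hσ₀ : σ₀ ζ = ζℂ := by
    have := hζ.embeddingsEquivPrimitiveRoots_apply_coe ℂ hirr σ₀
    rw [← this]
    simp [σ₀]
  -- the algebraic integer α
  set α : K := (∑ j ∈ Finset.range Q, (m j : K) * ζ ^ j) *
      (∑ j ∈ Finset.range Q, (m j : K) * ζ ^ (Q - j)) - 1 with hαdef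
  have hζQ : ζ ^ Q = 1 := by
    have := hζ.pow_eq_one
    exact this
  -- evaluation of α under any embedding
  have heval : ∀ σ : K →ₐ[ℚ] ℂ, σ α =
      ((‖(∑ j ∈ Finset.range Q, (m j : ℂ) * (σ ζ) ^ j)‖ ^ 2 - 1 : ℝ) : ℂ) := by
    intro σ
    have hμQ : (σ ζ) ^ Q = 1 := by rw [← map_pow, hζQ, map_one]
    have h1 : σ (∑ j ∈ Finset.range Q, (m j : K) * ζ ^ j)
        = ∑ j ∈ Finset.range Q, (m j : ℂ) * (σ ζ) ^ j := by
      rw [map_sum]; exact Finset.sum_congr rfl fun j _ => by rw [map_mul, map_natCast, map_pow]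
    have h2 : σ (∑ j ∈ Finset.range Q, (m j : K) * ζ ^ (Q - j))
        = ∑ j ∈ Finset.range Q, (m j : ℂ) * (σ ζ) ^ (Q - j) := by
      rw [map_sum]; exact Finset.sum_congr rfl fun j _ => by rw [map_mul, map_natCast, map_pow]
    rw [map_sub, map_one, map_mul, h1, h2, conj_sum_pow Q hQpos _ hμQ, Complex.mul_conj]
    rw [Complex.normSq_eq_norm_sq]
    push_cast
    ring
  -- norm of σ ζ is 1
  have habsμ : ∀ σ : K →ₐ[ℚ] ℂ, ‖(σ ζ)‖ = 1 := by
    intro σ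
    have hμQ : (σ ζ) ^ Q = 1 := by rw [← map_pow, hζQ, map_one]
    exact Complex.norm_eq_one_of_pow_eq_one hμQ hQpos.ne'
  -- bound on embeddings
  have hgbound : ∀ σ : K →ₐ[ℚ] ℂ,
      ‖(∑ j ∈ Finset.range Q, (m j : ℂ) * (σ ζ) ^ j)‖ ≤ N := by
    intro σ
    calc ‖(∑ j ∈ Finset.range Q, (m j : ℂ) * (σ ζ) ^ j)‖
        ≤ ∑ j ∈ Finset.range Q, ‖((m j : ℂ) * (σ ζ) ^ j)‖ :=
          norm_sum_le _ _
      _ = ∑ j ∈ Finset.range Q, (m j : ℝ) := by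
          refine Finset.sum_congr rfl fun j _ => ?_
          rw [norm_mul, norm_pow, habsμ, one_pow, mul_one, Complex.norm_natCast]
      _ = (N : ℝ) := by rw [← hmN]; push_cast; ring
  have hbound : ∀ σ : K →ₐ[ℚ] ℂ, ‖(σ α)‖ ≤ 2 * (N : ℝ) ^ 2 := by
    intro σ
    rw [heval σ, Complex.norm_real, Real.norm_eq_abs]
    have h1 := hgbound σ
    have h2 : (0:ℝ) ≤ ‖(∑ j ∈ Finset.range Q, (m j : ℂ) * (σ ζ) ^ j)‖ :=
      norm_nonneg _
    have hN1' : (1:ℝ) ≤ N := by exact_mod_cast hN1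
    rw [abs_le]
    constructor <;> nlinarith
  -- value at σ₀
  have hkg : k = ∑ j ∈ Finset.range Q, (m j : ℂ) * ζℂ ^ j := by
    rw [hrep]
    exact Finset.sum_congr rfl fun j _ => by rw [kvec_eq_pow]
  have hσ₀α : σ₀ α = ((‖k‖ ^ 2 - 1 : ℝ) : ℂ) := by
    rw [heval σ₀, hσ₀, ← hkg]
  -- α ≠ 0
  have hα0 : α ≠ 0 := by
    intro h
    apply habsk
    have := hσ₀α
    rw [h, map_zero] at this
    have h2 : ‖k‖ ^ 2 - 1 = 0 := by exact_mod_cast this.symm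
    nlinarith [norm_nonneg k]
  -- the conjugate embedding σ₁
  set σ₁ : K →ₐ[ℚ] ℂ := ((Complex.conjAe.toAlgHom.restrictScalars ℚ)).comp σ₀ with hσ₁def
  have hσ₁app : ∀ x : K, σ₁ x = (starRingEnd ℂ) (σ₀ x) := fun x => rfl
  have hσ₁ne : σ₁ ≠ σ₀ := by
    intro h
    have h1 : σ₁ ζ = σ₀ ζ := by rw [h]
    rw [hσ₁app, hσ₀, Complex.conj_eq_iff_im] at h1
    have him : ζℂ.im = Real.sin (2 * Real.pi / Q) := by
      have : (2 * ↑Real.pi * Complex.I / ↑Q) = ((2 * Real.pi / Q : ℝ) : ℂ) * Complex.I := by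
        push_cast; ring
      rw [hζℂdef, this, Complex.exp_ofReal_mul_I_im]
    rw [him] at h1
    have hsin : 0 < Real.sin (2 * Real.pi / Q) := by
      apply Real.sin_pos_of_pos_of_lt_pi
      · positivity
      · rw [div_lt_iff₀ (by positivity : (0:ℝ) < Q)]
        have hpi : 0 < Real.pi := Real.pi_pos
        have : (8:ℝ) ≤ Q := by exact_mod_cast hQ
        nlinarith
    linarith
  have hσ₁α : ‖(σ₁ α)‖ = ‖(σ₀ α)‖ := by
    rw [hσ₁app, Complex.norm_conj]
  -- α is integral over ℤ
  have hζint : IsIntegral ℤ ζ := hζ.isIntegral hQpos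
  have hint : IsIntegral ℤ α := by
    refine IsIntegral.sub ?_ isIntegral_one
    refine IsIntegral.mul ?_ ?_ <;>
    · refine IsIntegral.sum _ fun j _ => IsIntegral.mul ?_ (hζint.pow _)
      have h : ((m j : ℕ) : K) = algebraMap ℤ K (m j) := by simp
      rw [h]; exact isIntegral_algebraMap
  -- the norm is a nonzero integer
  have hnormint : IsIntegral ℤ (Algebra.norm ℚ α) := Algebra.isIntegral_norm ℚ hint
  obtain ⟨z, hz⟩ := IsIntegrallyClosed.isIntegral_iff.mp hnormint
  have hnorm0 : Algebra.norm ℚ α ≠ 0 := by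
    rw [Algebra.norm_ne_zero_iff]
    exact hα0
  have hz0 : z ≠ 0 := by rintro rfl; simp at hz; exact hnorm0 hz.symm
  have h1abs : (1:ℝ) ≤ ‖(algebraMap ℚ ℂ (Algebra.norm ℚ α))‖ := by
    rw [← hz]
    have h : (algebraMap ℚ ℂ) ((algebraMap ℤ ℚ) z) = (z : ℂ) := by
      simp [eq_intCast]
    rw [h, Complex.norm_intCast]
    have : (1:ℤ) ≤ |z| := Int.one_le_abs hz0
    exact_mod_cast this
  -- norm as product over embeddings
  have hprod : algebraMap ℚ ℂ (Algebra.norm ℚ α) = ∏ σ : K →ₐ[ℚ] ℂ, σ α :=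
    Algebra.norm_eq_prod_embeddings ℚ ℂ α
  have h1prod : (1:ℝ) ≤ ∏ σ : K →ₐ[ℚ] ℂ, ‖(σ α)‖ := by
    rw [← norm_prod, ← hprod]
    exact h1abs
  -- cardinality of embeddings
  have hcard : Fintype.card (K →ₐ[ℚ] ℂ) = 2 * l + 2 := by
    rw [Fintype.card_congr (hζ.embeddingsEquivPrimitiveRoots ℂ hirr), Fintype.card_coe]
    show (primitiveRoots Q ℂ).card = 2 * l + 2
    rw [hζℂ.card_primitiveRoots, ← hφ]
  -- split the product
  have hmem₀ : σ₀ ∈ (Finset.univ : Finset (K →ₐ[ℚ] ℂ)) := Finset.mem_univ _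
  have hmem₁ : σ₁ ∈ Finset.univ.erase σ₀ := Finset.mem_erase.mpr ⟨hσ₁ne, Finset.mem_univ _⟩
  set s : Finset (K →ₐ[ℚ] ℂ) := (Finset.univ.erase σ₀).erase σ₁ with hs
  have hprodsplit : ∏ σ : K →ₐ[ℚ] ℂ, ‖(σ α)‖
      = ‖(σ₀ α)‖ * (‖(σ₁ α)‖ * ∏ σ ∈ s, ‖(σ α)‖) := by
    rw [← Finset.mul_prod_erase _ _ hmem₀, ← Finset.mul_prod_erase _ _ hmem₁]
  have hscard : s.card = 2 * l := by
    rw [hs, Finset.card_erase_of_mem hmem₁, Finset.card_erase_of_mem hmem₀,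
      Finset.card_univ, hcard]
    omega
  have hsbound : ∏ σ ∈ s, ‖(σ α)‖ ≤ (2 * (N:ℝ)^2) ^ (2*l) := by
    calc ∏ σ ∈ s, ‖(σ α)‖ ≤ ∏ _σ ∈ s, (2 * (N:ℝ)^2) :=
          Finset.prod_le_prod (fun i _ => norm_nonneg _) (fun i _ => hbound i)
      _ = (2 * (N:ℝ)^2) ^ s.card := Finset.prod_const _
      _ = (2 * (N:ℝ)^2) ^ (2*l) := by rw [hscard]
  set A : ℝ := |‖k‖ ^ 2 - 1| with hA
  have hσ₀abs : ‖(σ₀ α)‖ = A := by rw [hσ₀α, Complex.norm_real, Real.norm_eq_abs]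
  have h2N : (0:ℝ) < 2 * (N:ℝ)^2 := by
    have : (1:ℝ) ≤ N := by exact_mod_cast hN1
    positivity
  have hApos : 0 ≤ A := abs_nonneg _
  have hfinal : 1 ≤ A * A * (2*(N:ℝ)^2)^(2*l) := by
    have hsnn : (0:ℝ) ≤ ∏ σ ∈ s, ‖(σ α)‖ :=
      Finset.prod_nonneg fun i _ => norm_nonneg _
    calc (1:ℝ) ≤ ∏ σ : K →ₐ[ℚ] ℂ, ‖(σ α)‖ := h1prod
      _ = A * (A * ∏ σ ∈ s, ‖(σ α)‖) := by
          rw [hprodsplit, hσ₀abs, hσ₁α, hσ₀abs]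
      _ ≤ A * (A * (2*(N:ℝ)^2)^(2*l)) := by
          refine mul_le_mul_of_nonneg_left (mul_le_mul_of_nonneg_left hsbound hApos) hApos
      _ = A * A * (2*(N:ℝ)^2)^(2*l) := by ring
  -- final arithmetic
  have hB : (0:ℝ) < (2*(N:ℝ)^2)^l := pow_pos h2N l
  have hB2 : (2*(N:ℝ)^2)^(2*l) = ((2*(N:ℝ)^2)^l)^2 := by
    rw [← pow_mul, mul_comm l 2]
  have hAB : 1 ≤ A * (2*(N:ℝ)^2)^l := by
    rw [hB2] at hfinal
    exact aux_sq A _ hApos hB hfinal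
  exact aux_final A l N (by exact_mod_cast hN1) hApos hAB

/-- Diophantine bound: with l + 1 = φ(Q)/2 there is c > 0 such that
||k|² - 1| ≥ c / N_k^{2l} for every k ∈ Γ with |k| ≠ 1. -/
theorem stmt_9 (Q : ℕ) (hQ : 8 ≤ Q) (hQeven : Even Q)
    (l : ℕ) (hl : l + 1 = Nat.totient Q / 2) :
    ∃ c > (0 : ℝ), ∀ k ∈ Qlattice Q, ‖k‖ ≠ 1 →
      c / (Nord Q k : ℝ) ^ (2 * l) ≤ |(‖k‖) ^ 2 - 1| := by
  have hφ : Nat.totient Q = 2 * l + 2 := by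
    have he : Even (Nat.totient Q) := Nat.totient_even (by omega)
    obtain ⟨t, ht⟩ := he
    omega
  refine ⟨((1:ℝ)/2)^l, by positivity, ?_⟩
  intro k hk habsk
  obtain ⟨m0, hm0⟩ := hk
  have hne : {n | ∃ m : ℕ → ℕ, (∑ j ∈ Finset.range Q, m j) = n ∧
      k = ∑ j ∈ Finset.range Q, (m j : ℂ) * kvec Q j}.Nonempty :=
    ⟨_, m0, rfl, hm0⟩
  have hmem : Nord Q k ∈ {n | ∃ m : ℕ → ℕ, (∑ j ∈ Finset.range Q, m j) = n ∧
      k = ∑ j ∈ Finset.range Q, (m j : ℂ) * kvec Q j} := Nat.sInf_mem hne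
  obtain ⟨m, hmN, hrep⟩ := hmem
  by_cases hN0 : Nord Q k = 0
  · have hm0' : ∀ j ∈ Finset.range Q, m j = 0 := by
      rw [hN0] at hmN
      exact fun j hj => Finset.sum_eq_zero_iff.mp hmN j hj
    have hk0 : k = 0 := by
      rw [hrep]
      exact Finset.sum_eq_zero fun j hj => by rw [hm0' j hj]; simp
    rw [hN0, hk0]
    simp only [map_zero, Nat.cast_zero]
    rcases Nat.eq_zero_or_pos l with hl0 | hl0
    · subst hl0; norm_num
    · rw [zero_pow (by omega : 2*l ≠ 0)]
      norm_num
  · exact key Q hQ l hφ m (Nord Q k) hmN (by omega) k hrep habsk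
end

section
/- Fix s > Q/4 where Q ≥ 8 is even. The space H_s = {U = Σ_{k∈Γ} U_k e^{ik·x} : ||U||_s² = Σ_{k∈Γ}(1+N_k²)^s |U_k|² < ∞} is a Banach algebra under pointwise multiplication: there exists c_s > 0 such that ||UV||_s ≤ c_s ||U||_s ||V||_s for all U, V ∈ H_s. -/
/-- The squared H_s norm of a family of Fourier coefficients  supported on Γ:
‖U‖_s² = Σ_{k∈Γ} (1+N_k²)^s |U_k|². -/
noncomputable def HnormSq (Q : ℕ) (s : ℝ) (f : ℂ → ℂ) : ENNReal :=
  ∑' k : Qlattice Q, ENNReal.ofReal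
    ((1 + (Nord Q (k : ℂ) : ℝ) ^ 2) ^ s * ‖f (k : ℂ)‖ ^ 2)

/-- Convolution of Fourier coefficients: the coefficients of the pointwise product,
(UV)_K = Σ_{k+k'=K} U_k V_{k'}. -/
noncomputable def conv (f g : ℂ → ℂ) (K : ℂ) : ℂ := ∑' k : ℂ, f k * g (K - k)


open Function MeasureTheory Finset

/-! ### Auxiliary lemmas -/

section Aux

lemma meas_ctble {f : ℂ → ENNReal} (h : (support f).Countable) : Measurable f := by
  intro t _
  by_cases h0 : (0 : ENNReal) ∈ t
  · have : f ⁻¹' t = (f ⁻¹' t ∩ support f) ∪ (support f)ᶜ := by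
      ext x
      by_cases hx : x ∈ support f
      · simp [hx]
      · simp only [Set.mem_union, Set.mem_inter_iff, Set.mem_compl_iff, hx]
        simp only [mem_support, not_not] at hx
        simp [Set.mem_preimage, hx, h0]
    rw [this]
    exact ((h.mono Set.inter_subset_right).measurableSet).union h.measurableSet.compl
  · have : f ⁻¹' t ⊆ support f := by
      intro x hx
      simp only [mem_support]
      intro hfx
      rw [Set.mem_preimage, hfx] at hx
      exact h0 hx
    exact (h.mono this).measurableSet

lemma ennreal_cs (u v : ℂ → ENNReal) (hu : (support u).Countable)
    (hv : (support v).Countable) :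
    ∑' k, u k * v k ≤ (∑' k, u k ^ 2) ^ (1/2 : ℝ) * (∑' k, v k ^ 2) ^ (1/2 : ℝ) := by
  have hconj : Real.HolderConjugate 2 2 := Real.HolderConjugate.two_two
  have := ENNReal.lintegral_mul_le_Lp_mul_Lq (Measure.count : Measure ℂ) hconj
    (meas_ctble hu).aemeasurable (meas_ctble hv).aemeasurable
  simpa only [lintegral_count, Pi.mul_apply, ENNReal.rpow_two] using this

lemma tsum_sub_left (b : ℂ → ENNReal) (K : ℂ) : ∑' k, b (K - k) = ∑' k, b k :=
  (Equiv.subLeft K).tsum_eq b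

lemma tsum_sub_right (b : ℂ → ENNReal) (k : ℂ) : ∑' K, b (K - k) = ∑' K, b K :=
  (Equiv.subRight k).tsum_eq b

lemma sq_rpow_half (x : ENNReal) : (x ^ (1/2 : ℝ)) ^ 2 = x := by
  rw [← ENNReal.rpow_two, ← ENNReal.rpow_mul]
  norm_num

lemma young (a b : ℂ → ENNReal) (ha : (support a).Countable) (hb : (support b).Countable) :
    ∑' K, (∑' k, a k * b (K - k)) ^ 2 ≤ (∑' k, a k ^ 2) * (∑' k, b k) ^ 2 := by
  set B := ∑' k, b k with hB
  have hsupb : ∀ K : ℂ, (support fun k => b (K - k)).Countable := by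
    intro K
    have : (support fun k => b (K - k)) = (fun k => K - k) ⁻¹' support b := rfl
    rw [this]
    exact hb.preimage (Equiv.subLeft K).injective
  have key : ∀ K, (∑' k, a k * b (K - k)) ^ 2 ≤ (∑' k, a k ^ 2 * b (K - k)) * B := by
    intro K
    have step : (∑' k, a k * b (K - k)) ≤
        (∑' k, a k ^ 2 * b (K - k)) ^ (1/2:ℝ) * B ^ (1/2:ℝ) := by
      have h1 : ∀ k, a k * b (K - k)
          = (a k * (b (K-k)) ^ (1/2:ℝ)) * (b (K-k)) ^ (1/2:ℝ) := by
        intro k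
        rw [mul_assoc, ← ENNReal.rpow_add_of_nonneg _ _ (by norm_num) (by norm_num)]
        norm_num
      calc ∑' k, a k * b (K - k)
          = ∑' k, (a k * (b (K-k))^(1/2:ℝ)) * (b (K-k))^(1/2:ℝ) := by simp_rw [h1]
        _ ≤ (∑' k, (a k * (b (K-k))^(1/2:ℝ))^2)^(1/2:ℝ)
            * (∑' k, ((b (K-k))^(1/2:ℝ))^2)^(1/2:ℝ) := by
            refine ennreal_cs _ _ (ha.mono ?_) ((hsupb K).mono ?_)
            · intro k hk
              simp only [mem_support] at hk ⊢
              exact fun h => hk (by simp [h])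
            · intro k hk
              simp only [mem_support] at hk ⊢
              intro h
              exact hk (by simp [h, ENNReal.zero_rpow_of_pos (by norm_num : (0:ℝ) < 1/2)])
        _ = (∑' k, a k ^ 2 * b (K - k)) ^ (1/2:ℝ) * B ^ (1/2:ℝ) := by
            congr 1
            · congr 1
              refine tsum_congr fun k => ?_
              rw [mul_pow, sq_rpow_half]
            · have h2 : (∑' (k : ℂ), (b (K - k) ^ (1/2:ℝ)) ^ 2) = B := by
                rw [hB, ← tsum_sub_left b K]
                exact tsum_congr fun k => sq_rpow_half _
              rw [h2]
    calc (∑' k, a k * b (K - k)) ^ 2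
        ≤ ((∑' k, a k ^ 2 * b (K - k)) ^ (1/2:ℝ) * B ^ (1/2:ℝ)) ^ 2 :=
          pow_le_pow_left₀ zero_le step 2
      _ = (∑' k, a k ^ 2 * b (K - k)) * B := by rw [mul_pow, sq_rpow_half, sq_rpow_half]
  calc ∑' K, (∑' k, a k * b (K - k)) ^ 2
      ≤ ∑' K, (∑' k, a k ^ 2 * b (K - k)) * B := ENNReal.tsum_le_tsum key
    _ = (∑' K, ∑' k, a k ^ 2 * b (K - k)) * B := ENNReal.tsum_mul_right
    _ = (∑' k, ∑' K, a k ^ 2 * b (K - k)) * B := by rw [ENNReal.tsum_comm]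
    _ = (∑' k, a k ^ 2 * B) * B := by
        congr 1
        refine tsum_congr fun k => ?_
        rw [ENNReal.tsum_mul_left, tsum_sub_right]
    _ = (∑' k, a k ^ 2) * B ^ 2 := by rw [ENNReal.tsum_mul_right, sq, mul_assoc]

lemma kvec_neg {Q d : ℕ} (hd : Q = d + d) (hd0 : d ≠ 0) (j : ℕ) :
    kvec Q (d + j) = -kvec Q j := by
  have hdC : (Q : ℂ) = 2 * d := by rw [hd]; push_cast; ring
  have hd0C : (d : ℂ) ≠ 0 := Nat.cast_ne_zero.mpr hd0
  have harg : 2 * (Real.pi : ℂ) * Complex.I * ((d : ℂ) + j) / (Q : ℂ)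
      = 2 * (Real.pi : ℂ) * Complex.I * j / (Q : ℂ) + Real.pi * Complex.I := by
    rw [hdC]; field_simp; ring
  unfold kvec
  push_cast
  rw [harg, Complex.exp_add, Complex.exp_pi_mul_I]
  ring

lemma Nord_exists {Q : ℕ} {k : ℂ} (hk : k ∈ Qlattice Q) :
    ∃ m : ℕ → ℕ, (∑ j ∈ Finset.range Q, m j) = Nord Q k ∧
      k = ∑ j ∈ Finset.range Q, (m j : ℂ) * kvec Q j := by
  obtain ⟨m, hm⟩ := hk
  have hne : {n | ∃ m : ℕ → ℕ, (∑ j ∈ Finset.range Q, m j) = n ∧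
      k = ∑ j ∈ Finset.range Q, (m j : ℂ) * kvec Q j}.Nonempty :=
    ⟨∑ j ∈ Finset.range Q, m j, m, rfl, hm⟩
  exact Nat.sInf_mem hne

lemma Nord_add {Q : ℕ} {k k' : ℂ} (hk : k ∈ Qlattice Q) (hk' : k' ∈ Qlattice Q) :
    Nord Q (k + k') ≤ Nord Q k + Nord Q k' := by
  obtain ⟨m, hm1, hm2⟩ := Nord_exists hk
  obtain ⟨m', hm'1, hm'2⟩ := Nord_exists hk'
  refine Nat.sInf_le ⟨fun j => m j + m' j, ?_, ?_⟩
  · rw [Finset.sum_add_distrib, hm1, hm'1]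
  · rw [hm2, hm'2, ← Finset.sum_add_distrib]
    refine Finset.sum_congr rfl fun j _ => ?_
    push_cast
    ring

lemma exists_inj (Q d : ℕ) (hd : Q = d + d) (hd0 : d ≠ 0) :
    ∃ i : Qlattice Q → (Fin d → ℤ), Function.Injective i ∧
      ∀ k : Qlattice Q, (∑ j : Fin d, |i k j|) ≤ (Nord Q (k : ℂ) : ℤ) := by
  have hspec := fun k : Qlattice Q => Nord_exists k.2
  choose m hm1 hm2 using hspec
  refine ⟨fun k => fun j => (m k j : ℤ) - (m k (d + (j : ℕ)) : ℤ), ?_, ?_⟩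
  · -- injectivity via recovery
    have hrec : ∀ k : Qlattice Q, (k : ℂ) =
        ∑ j ∈ Finset.range d, (((m k j : ℤ) - (m k (d + j) : ℤ) : ℤ) : ℂ) * kvec Q j := by
      intro k
      have h2 := hm2 k
      have hr : Finset.range Q = Finset.range (d + d) := by rw [hd]
      rw [hr, Finset.sum_range_add] at h2
      rw [h2]
      have : ∀ j ∈ Finset.range d, (m k (d + j) : ℂ) * kvec Q (d + j)
          = -((m k (d + j) : ℂ) * kvec Q j) := by
        intro j _
        rw [kvec_neg hd hd0 j]; ring
      rw [Finset.sum_congr rfl this, Finset.sum_neg_distrib, ← sub_eq_add_neg,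
        ← Finset.sum_sub_distrib]
      refine Finset.sum_congr rfl fun j _ => ?_
      push_cast
      ring
    intro k k' hkk'
    have : (k : ℂ) = (k' : ℂ) := by
      rw [hrec k, hrec k']
      refine Finset.sum_congr rfl fun j hj => ?_
      have hjd : j < d := Finset.mem_range.mp hj
      have := congrFun hkk' ⟨j, hjd⟩
      simp only at this
      rw [this]
    exact Subtype.ext this
  · intro k
    have habs : ∀ j : Fin d, |(m k (j : ℕ) : ℤ) - (m k (d + (j : ℕ)) : ℤ)|
        ≤ (m k (j : ℕ) : ℤ) + (m k (d + (j : ℕ)) : ℤ) := by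
      intro j
      calc |(m k (j : ℕ) : ℤ) - (m k (d + (j : ℕ)) : ℤ)|
          ≤ |(m k (j : ℕ) : ℤ)| + |(m k (d + (j : ℕ)) : ℤ)| := abs_sub _ _
        _ = (m k (j : ℕ) : ℤ) + (m k (d + (j : ℕ)) : ℤ) := by
            rw [abs_of_nonneg (Int.natCast_nonneg _), abs_of_nonneg (Int.natCast_nonneg _)]
    calc (∑ j : Fin d, |(m k (j : ℕ) : ℤ) - (m k (d + (j : ℕ)) : ℤ)|)
        ≤ ∑ j : Fin d, ((m k (j : ℕ) : ℤ) + (m k (d + (j : ℕ)) : ℤ)) :=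
          Finset.sum_le_sum fun j _ => habs j
      _ = (Nord Q (k : ℂ) : ℤ) := by
          have hr : Finset.range Q = Finset.range (d + d) := by rw [hd]
          rw [← hm1 k, hr, Finset.sum_range_add]
          push_cast
          rw [Fin.sum_univ_eq_sum_range (fun j => ((m k j : ℤ) + (m k (d + j) : ℤ))) d]
          rw [Finset.sum_add_distrib]

lemma int_summable {p : ℝ} (hp : 1/2 < p) : Summable (fun m : ℤ => (1 + (m:ℝ)^2) ^ (-p)) := by
  have hp0 : 0 < p := lt_trans (by norm_num) hp
  have hnat : Summable (fun n : ℕ => (1 + (n:ℝ)^2) ^ (-p)) := by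
    have hbase : Summable (fun n : ℕ => ((n:ℝ)) ^ (-(2*p))) :=
      Real.summable_nat_rpow.mpr (by linarith)
    have hshift : Summable (fun n : ℕ => (((n+1:ℕ) : ℝ)) ^ (-(2*p))) :=
      (summable_nat_add_iff 1).mpr hbase
    refine Summable.of_nonneg_of_le (fun n => Real.rpow_nonneg (by positivity) _)
      (fun n => ?_) (hshift.mul_left ((2:ℝ)^p))
    have h1 : ((n:ℝ)+1)^2 / 2 ≤ 1 + (n:ℝ)^2 := by nlinarith [sq_nonneg ((n:ℝ) - 1)]
    have h2 : (1 + (n:ℝ)^2) ^ (-p) ≤ (((n:ℝ)+1)^2 / 2) ^ (-p) :=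
      Real.rpow_le_rpow_of_nonpos (by positivity) h1 (neg_nonpos.mpr hp0.le)
    refine h2.trans (le_of_eq ?_)
    rw [Real.div_rpow (by positivity) (by norm_num)]
    rw [← Real.rpow_natCast ((n:ℝ)+1) 2, ← Real.rpow_mul (by positivity)]
    have he : ((2:ℕ):ℝ) * (-p) = -(2*p) := by push_cast; ring
    rw [he, Real.rpow_neg (by norm_num : (0:ℝ) ≤ 2), div_eq_mul_inv, inv_inv]
    push_cast
    ring
  apply Summable.of_nat_of_neg
  · exact hnat.congr fun n => by norm_num
  · exact hnat.congr fun n => by push_cast; norm_num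

lemma tsum_pi_prod (a : ℤ → ENNReal) (e : ℕ) :
    (∑' n : Fin e → ℤ, ∏ j, a (n j)) = (∑' m, a m) ^ e := by
  induction e with
  | zero =>
    rw [pow_zero]
    have h1 : ∀ n : Fin 0 → ℤ, (∏ j, a (n j)) = 1 := fun n => by simp
    rw [tsum_congr h1]
    haveI : Unique (Fin 0 → ℤ) := ⟨⟨fun j => j.elim0⟩, fun f => funext fun j => j.elim0⟩
    rw [tsum_eq_single default (fun b hb => absurd (Subsingleton.elim b default) hb)]
  | succ e ih =>
    have heq := (Fin.consEquiv (fun _ : Fin (e+1) => ℤ)).tsum_eq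
      (fun n : Fin (e+1) → ℤ => ∏ j, a (n j))
    rw [← heq, ENNReal.tsum_prod']
    have h2 : ∀ (x : ℤ) (n : Fin e → ℤ),
        (∏ j : Fin (e+1), a (((Fin.consEquiv (fun _ => ℤ)) (x, n)) j))
          = a x * ∏ j : Fin e, a (n j) := by
      intro x n
      rw [Fin.prod_univ_succ]
      simp [Fin.consEquiv]
    calc (∑' (x : ℤ) (n : Fin e → ℤ), ∏ j, a (((Fin.consEquiv (fun _ => ℤ)) (x, n)) j))
        = ∑' (x : ℤ), a x * ∑' n : Fin e → ℤ, ∏ j, a (n j) := by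
          refine tsum_congr fun x => ?_
          rw [← ENNReal.tsum_mul_left]
          exact tsum_congr fun n => h2 x n
      _ = (∑' m, a m) * (∑' m, a m) ^ e := by rw [ENNReal.tsum_mul_right, ih]
      _ = (∑' m, a m) ^ (e+1) := by rw [pow_succ]; ring

lemma Qlattice_countable (Q d : ℕ) (hd : Q = d + d) (hd0 : d ≠ 0) :
    (Qlattice Q).Countable := by
  obtain ⟨i, hinj, -⟩ := exists_inj Q d hd hd0
  exact Set.countable_coe_iff.mp hinj.countable

lemma counting (Q d : ℕ) (hd : Q = d + d) (hd0 : d ≠ 0) {s : ℝ} (hs : (d:ℝ)/2 < s) :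
    (∑' k : ℂ, (Qlattice Q).indicator
      (fun k => ENNReal.ofReal ((1 + (Nord Q k : ℝ)^2) ^ (-s))) k) ≠ ⊤ := by
  have hdR : (0:ℝ) < d := by
    exact_mod_cast Nat.pos_of_ne_zero hd0
  set p : ℝ := s / d with hpdef
  have hp : 1/2 < p := by
    rw [hpdef, lt_div_iff₀ hdR]
    linarith
  have hp0 : 0 < p := lt_trans (by norm_num) hp
  have hs0 : 0 < s := by nlinarith
  set a : ℤ → ENNReal := fun m => ENNReal.ofReal ((1 + (m:ℝ)^2) ^ (-p)) with ha
  have hA : (∑' m : ℤ, a m) ≠ ⊤ := by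
    rw [ha, ← ENNReal.ofReal_tsum_of_nonneg
      (fun m => Real.rpow_nonneg (by positivity) _) (int_summable hp)]
    exact ENNReal.ofReal_ne_top
  obtain ⟨i, hinj, hbound⟩ := exists_inj Q d hd hd0
  rw [← _root_.tsum_subtype]
  refine ne_top_of_le_ne_top ?_
    (Summable.tsum_le_tsum_of_inj (g := fun n : Fin d → ℤ => ∏ j, a (n j)) i hinj
      (fun _ _ => zero_le) (fun k => ?_) ENNReal.summable ENNReal.summable)
  · rw [tsum_pi_prod]
    exact ENNReal.pow_ne_top hA
  · set N : ℝ := (Nord Q (k:ℂ) : ℝ) with hN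
    have hN0 : (0:ℝ) ≤ N := Nat.cast_nonneg _
    have habs : (∑ j : Fin d, |(i k j : ℝ)|) ≤ N := by
      have h := hbound k
      have h2 : ((∑ j : Fin d, |i k j| : ℤ) : ℝ) ≤ ((Nord Q (k:ℂ) : ℤ) : ℝ) := Int.cast_le.mpr h
      push_cast at h2
      convert h2 using 2
    have hsq : (∑ j : Fin d, ((i k j : ℝ))^2) ≤ N^2 := by
      have hle : ∀ j : Fin d, ((i k j:ℝ))^2 ≤ |(i k j:ℝ)| * (∑ j' : Fin d, |(i k j':ℝ)|) := by
        intro j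
        rw [← sq_abs, sq]
        exact mul_le_mul_of_nonneg_left
          (Finset.single_le_sum (fun j' _ => abs_nonneg ((i k j':ℝ))) (Finset.mem_univ j))
          (abs_nonneg _)
      have h1 : (∑ j : Fin d, ((i k j:ℝ))^2) ≤ (∑ j : Fin d, |(i k j:ℝ)|)^2 := by
        calc (∑ j : Fin d, ((i k j:ℝ))^2)
            ≤ ∑ j : Fin d, |(i k j:ℝ)| * (∑ j' : Fin d, |(i k j':ℝ)|) :=
              Finset.sum_le_sum (fun j _ => hle j)
          _ = (∑ j : Fin d, |(i k j:ℝ)|)^2 := by rw [← Finset.sum_mul, sq]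
      exact h1.trans (pow_le_pow_left₀ (Finset.sum_nonneg fun j _ => abs_nonneg _) habs 2)
    have hprod : (∏ j : Fin d, (1 + (i k j:ℝ)^2)) ≤ (1 + N^2)^d := by
      have hle2 : ∀ j ∈ (Finset.univ : Finset (Fin d)), (1 + (i k j:ℝ)^2) ≤ 1 + N^2 := by
        intro j _
        have hj : (i k j:ℝ)^2 ≤ N^2 :=
          le_trans (Finset.single_le_sum (fun j' _ => sq_nonneg ((i k j':ℝ)))
            (Finset.mem_univ j)) hsq
        linarith
      have hpp := Finset.prod_le_prod (f := fun j : Fin d => 1 + (i k j:ℝ)^2)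
        (g := fun _ : Fin d => 1 + N^2) (fun j _ => by positivity) hle2
      simpa [Finset.prod_const] using hpp
    have hreal : (1+N^2)^(-s) ≤ ∏ j : Fin d, (1 + (i k j:ℝ)^2)^(-p) := by
      rw [Real.finset_prod_rpow _ _ (fun j _ => by positivity) (-p)]
      have hLHS : (1+N^2)^(-s) = ((1+N^2)^(d:ℕ)) ^ (-p) := by
        rw [← Real.rpow_natCast (1+N^2) d, ← Real.rpow_mul (by positivity)]
        congr 1
        rw [hpdef]
        field_simp
      rw [hLHS]
      exact Real.rpow_le_rpow_of_nonpos (by positivity) hprod (neg_nonpos.mpr hp0.le)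
    calc ENNReal.ofReal ((1 + N^2)^(-s))
        ≤ ENNReal.ofReal (∏ j : Fin d, (1 + (i k j:ℝ)^2)^(-p)) :=
          ENNReal.ofReal_le_ofReal hreal
      _ = ∏ j : Fin d, a (i k j) := by
          rw [ENNReal.ofReal_prod_of_nonneg (fun j _ => Real.rpow_nonneg (by positivity) _)]

lemma wt_tri {x y : ℝ} (hx : 0 ≤ x) (hy : 0 ≤ y) {s : ℝ} (hs0 : 0 < s) :
    (1+(x+y)^2)^(s/2) ≤ 2^s * ((1+x^2)^(s/2) + (1+y^2)^(s/2)) := by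
  set A := (1+x^2) ^ ((1:ℝ)/2) with hAdef
  set B := (1+y^2) ^ ((1:ℝ)/2) with hBdef
  have hA2 : A^2 = 1+x^2 := by
    rw [hAdef, ← Real.rpow_natCast ((1+x^2) ^ ((1:ℝ)/2)) 2, ← Real.rpow_mul (by positivity)]
    norm_num
  have hB2 : B^2 = 1+y^2 := by
    rw [hBdef, ← Real.rpow_natCast ((1+y^2) ^ ((1:ℝ)/2)) 2, ← Real.rpow_mul (by positivity)]
    norm_num
  have hA0 : 0 < A := Real.rpow_pos_of_pos (by positivity) _
  have hB0 : 0 < B := Real.rpow_pos_of_pos (by positivity) _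
  have hAx : x ≤ A := by nlinarith [hA2, hA0, hx]
  have hBy : y ≤ B := by nlinarith [hB2, hB0, hy]
  have hAB : x*y ≤ A*B := mul_le_mul hAx hBy hy hA0.le
  have hstep : 1+(x+y)^2 ≤ (A+B)^2 := by nlinarith [hAB, hA2, hB2]
  have h1 : (1+(x+y)^2)^(s/2) ≤ ((A+B)^2)^(s/2) :=
    Real.rpow_le_rpow (by positivity) hstep (by positivity)
  have h2 : ((A+B)^2)^(s/2) = (A+B)^s := by
    rw [← Real.rpow_natCast (A+B) 2, ← Real.rpow_mul (by positivity)]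
    congr 1
    push_cast
    ring
  have h3 : (A+B)^s ≤ 2^s * (A^s + B^s) := by
    rcases le_total A B with hc | hc
    · have h4 : (A+B)^s ≤ (2*B)^s := Real.rpow_le_rpow (by positivity) (by linarith) hs0.le
      rw [Real.mul_rpow (by norm_num) hB0.le] at h4
      have hA0s : 0 ≤ A^s := Real.rpow_nonneg hA0.le _
      nlinarith [Real.rpow_pos_of_pos (by norm_num : (0:ℝ) < 2) s]
    · have h4 : (A+B)^s ≤ (2*A)^s := Real.rpow_le_rpow (by positivity) (by linarith) hs0.le
      rw [Real.mul_rpow (by norm_num) hA0.le] at h4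
      have hB0s : 0 ≤ B^s := Real.rpow_nonneg hB0.le _
      nlinarith [Real.rpow_pos_of_pos (by norm_num : (0:ℝ) < 2) s]
  have h4 : A^s = (1+x^2)^(s/2) := by
    rw [hAdef, ← Real.rpow_mul (by positivity)]
    congr 1
    ring
  have h5 : B^s = (1+y^2)^(s/2) := by
    rw [hBdef, ← Real.rpow_mul (by positivity)]
    congr 1
    ring
  calc (1+(x+y)^2)^(s/2) ≤ (A+B)^s := h1.trans (le_of_eq h2)
    _ ≤ 2^s * (A^s + B^s) := h3
    _ = 2^s * ((1+x^2)^(s/2) + (1+y^2)^(s/2)) := by rw [h4, h5]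

lemma ofReal_norm_tsum_le (h : ℂ → ℂ) :
    ENNReal.ofReal ‖∑' k : ℂ, h k‖ ≤ ∑' k : ℂ, ENNReal.ofReal ‖h k‖ := by
  by_cases hs : Summable (fun k => ‖h k‖₊)
  · calc ENNReal.ofReal ‖∑' k : ℂ, h k‖ = ↑‖∑' k : ℂ, h k‖₊ := ofReal_norm_eq_enorm _
      _ ≤ ↑(∑' k : ℂ, ‖h k‖₊) := ENNReal.coe_le_coe.mpr (nnnorm_tsum_le hs)
      _ = ∑' k : ℂ, (‖h k‖₊ : ENNReal) := ENNReal.coe_tsum hs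
      _ = ∑' k : ℂ, ENNReal.ofReal ‖h k‖ :=
          tsum_congr fun k => (ofReal_norm_eq_enorm (h k)).symm
  · have htop : (∑' k : ℂ, (‖h k‖₊ : ENNReal)) = ⊤ := by
      by_contra hne
      exact hs (ENNReal.tsum_coe_ne_top_iff_summable.mp hne)
    calc ENNReal.ofReal ‖∑' k : ℂ, h k‖ ≤ ⊤ := le_top
      _ = ∑' k : ℂ, (‖h k‖₊ : ENNReal) := htop.symm
      _ = ∑' k : ℂ, ENNReal.ofReal ‖h k‖ :=
          tsum_congr fun k => (ofReal_norm_eq_enorm (h k)).symm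

lemma ofReal_wt_sq {s : ℝ} (w t : ℝ) (ht : 0 ≤ t) :
    ENNReal.ofReal ((1+w^2)^s * t^2) =
      (ENNReal.ofReal ((1+w^2)^(s/2)) * ENNReal.ofReal t)^2 := by
  have hbase : (0:ℝ) < 1 + w^2 := by positivity
  have hkey : ((1+w^2)^(s/2))^2 = (1+w^2)^s := by
    rw [← Real.rpow_natCast ((1+w^2)^(s/2)) 2, ← Real.rpow_mul hbase.le]
    congr 1
    push_cast
    ring
  rw [mul_pow, ← ENNReal.ofReal_pow (Real.rpow_nonneg hbase.le _),
    ← ENNReal.ofReal_pow ht, hkey, ← ENNReal.ofReal_mul (Real.rpow_nonneg hbase.le _)]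

lemma Hnorm_eq (Q : ℕ) (s : ℝ) (h : ℂ → ℂ) (hsupp : Function.support h ⊆ Qlattice Q) :
    HnormSq Q s h = ∑' k : ℂ,
      (ENNReal.ofReal ((1 + (Nord Q k:ℝ)^2) ^ (s/2)) * ENNReal.ofReal (‖h k‖))^2 := by
  rw [HnormSq, _root_.tsum_subtype (Qlattice Q)
    (fun k : ℂ => ENNReal.ofReal ((1 + (Nord Q k:ℝ)^2)^s * ‖h k‖^2))]
  refine tsum_congr fun k => ?_
  by_cases hk : k ∈ Qlattice Q
  · rw [Set.indicator_of_mem hk]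
    exact ofReal_wt_sq _ _ (norm_nonneg _)
  · rw [Set.indicator_of_notMem hk]
    have h0 : h k = 0 := by
      by_contra hne
      exact hk (hsupp hne)
    simp [h0]

lemma add_sq_le_four (x y : ENNReal) : (x+y)^2 ≤ 4*(x^2+y^2) := by
  have h1 : x + y ≤ 2 * max x y := by
    rcases le_total x y with h | h
    · calc x + y ≤ y + y := add_le_add_left h y
        _ = 2 * y := (two_mul y).symm
        _ ≤ 2 * max x y := mul_le_mul_right (le_max_right x y) 2
    · calc x + y ≤ x + x := add_le_add_right h x
        _ = 2 * x := (two_mul x).symm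
        _ ≤ 2 * max x y := mul_le_mul_right (le_max_left x y) 2
  calc (x+y)^2 ≤ (2 * max x y)^2 := pow_le_pow_left₀ zero_le h1 2
    _ = 4 * (max x y)^2 := by ring
    _ ≤ 4 * (x^2+y^2) := by
        refine mul_le_mul_right ?_ 4
        rcases le_total x y with h | h
        · rw [max_eq_right h]; exact le_add_self
        · rw [max_eq_left h]; exact le_self_add

end Aux

/-- for s > Q/4, H_s is a Banach algebra:
‖UV‖_s ≤ c_s ‖U‖_s ‖V‖_s. -/
theorem stmt_10 (Q : ℕ) (hQ : 8 ≤ Q) (hQeven : Even Q) (s : ℝ) (hs : (Q : ℝ) / 4 < s) :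
    ∃ c > (0 : ℝ), ∀ f g : ℂ → ℂ,
      Function.support f ⊆ Qlattice Q → Function.support g ⊆ Qlattice Q →
      HnormSq Q s (conv f g) ^ (1 / 2 : ℝ) ≤
        ENNReal.ofReal c * HnormSq Q s f ^ (1 / 2 : ℝ) * HnormSq Q s g ^ (1 / 2 : ℝ) := by
  obtain ⟨d, hd⟩ := hQeven
  have hd0 : d ≠ 0 := by omega
  have h8 : (8:ℝ) ≤ (Q:ℝ) := by exact_mod_cast hQ
  have hQd : (Q:ℝ) = (d:ℝ) + (d:ℝ) := by exact_mod_cast hd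
  have hs0 : 0 < s := by nlinarith
  have hsd : (d:ℝ)/2 < s := by nlinarith
  have hΓc : (Qlattice Q).Countable := Qlattice_countable Q d hd hd0
  set V : ℂ → ENNReal := fun k => ENNReal.ofReal ((1 + (Nord Q k:ℝ)^2) ^ (s/2)) with hV
  set Cw := ∑' k : ℂ, (Qlattice Q).indicator
      (fun k => ENNReal.ofReal ((1 + (Nord Q k:ℝ)^2) ^ (-s))) k with hCw
  have hCwne : Cw ≠ ⊤ := counting Q d hd hd0 hsd
  have h2s : (0:ℝ) < (2:ℝ)^s := Real.rpow_pos_of_pos (by norm_num) s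
  set c : ℝ := Real.sqrt (((2:ℝ)^s)^2 * 8 * (Cw.toReal + 1)) with hc
  have hcpos : 0 < c := Real.sqrt_pos.mpr (by positivity)
  refine ⟨c, hcpos, ?_⟩
  intro f g hf hg
  set A : ℂ → ENNReal := fun k => ENNReal.ofReal (‖f k‖) with hA
  set Bg : ℂ → ENNReal := fun k => ENNReal.ofReal (‖g k‖) with hB
  have hAout : ∀ k, k ∉ Qlattice Q → A k = 0 := by
    intro k hk
    have hfk : f k = 0 := by
      by_contra hne
      exact hk (hf hne)
    simp [hA, hfk]
  have hBout : ∀ k, k ∉ Qlattice Q → Bg k = 0 := by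
    intro k hk
    have hgk : g k = 0 := by
      by_contra hne
      exact hk (hg hne)
    simp [hB, hgk]
  have hsuppA : (support A).Countable := by
    refine hΓc.mono fun k hk => ?_
    by_contra hkn
    exact hk (hAout k hkn)
  have hsuppB : (support Bg).Countable := by
    refine hΓc.mono fun k hk => ?_
    by_contra hkn
    exact hk (hBout k hkn)
  set F : ℂ → ENNReal := fun k => V k * A k with hF
  set G : ℂ → ENNReal := fun k => V k * Bg k with hG
  have hsuppF : (support F).Countable := by
    refine hsuppA.mono fun k hk => ?_
    simp only [mem_support, hF] at hk ⊢
    exact fun h0 => hk (by rw [h0, mul_zero])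
  have hsuppG : (support G).Countable := by
    refine hsuppB.mono fun k hk => ?_
    simp only [mem_support, hG] at hk ⊢
    exact fun h0 => hk (by rw [h0, mul_zero])
  set I : ℂ → ENNReal := fun K => ∑' k, A k * Bg (K - k) with hI
  have hconv_le : ∀ K, ENNReal.ofReal (‖conv f g K‖) ≤ I K := by
    intro K
    have h1 : ENNReal.ofReal (‖conv f g K‖)
        = ENNReal.ofReal ‖∑' k : ℂ, f k * g (K - k)‖ := by
      rw [conv]
    rw [h1]
    refine (ofReal_norm_tsum_le _).trans (le_of_eq (tsum_congr fun k => ?_))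
    rw [norm_mul, ENNReal.ofReal_mul (norm_nonneg _)]
  have hLHS1 : HnormSq Q s (conv f g) ≤ ∑' K : ℂ, (V K * I K)^2 := by
    rw [HnormSq, _root_.tsum_subtype (Qlattice Q)
      (fun K : ℂ => ENNReal.ofReal ((1 + (Nord Q K:ℝ)^2)^s * ‖conv f g K‖^2))]
    refine ENNReal.tsum_le_tsum fun K => ?_
    by_cases hK : K ∈ Qlattice Q
    · rw [Set.indicator_of_mem hK, ofReal_wt_sq _ _ (norm_nonneg _)]
      exact pow_le_pow_left₀ zero_le (mul_le_mul_right (hconv_le K) _) 2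
    · rw [Set.indicator_of_notMem hK]
      exact zero_le
  have htri : ∀ K k : ℂ, V K * (A k * Bg (K-k)) ≤
      ENNReal.ofReal ((2:ℝ)^s) * (F k * Bg (K-k) + A k * G (K-k)) := by
    intro K k
    by_cases hz : A k * Bg (K-k) = 0
    · rw [hz, mul_zero]
      exact zero_le
    · have hAk : A k ≠ 0 := fun h0 => hz (by rw [h0, zero_mul])
      have hBk : Bg (K-k) ≠ 0 := fun h0 => hz (by rw [h0, mul_zero])
      have hkG : k ∈ Qlattice Q := by
        by_contra hkn
        exact hAk (hAout k hkn)
      have hk2G : K - k ∈ Qlattice Q := by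
        by_contra hkn
        exact hBk (hBout _ hkn)
      have hVK : V K ≤ ENNReal.ofReal ((2:ℝ)^s) * (V k + V (K-k)) := by
        have hadd := Nord_add hkG hk2G
        rw [show k + (K - k) = K from by ring] at hadd
        have hNord : (Nord Q K : ℝ) ≤ (Nord Q k : ℝ) + (Nord Q (K-k) : ℝ) := by
          exact_mod_cast hadd
        have hmono : (1 + (Nord Q K:ℝ)^2)^(s/2)
            ≤ (1 + ((Nord Q k:ℝ) + (Nord Q (K-k):ℝ))^2)^(s/2) := by
          refine Real.rpow_le_rpow (by positivity) ?_ (by positivity)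
          nlinarith [(Nat.cast_nonneg (Nord Q K) : (0:ℝ) ≤ _),
            (Nat.cast_nonneg (Nord Q k) : (0:ℝ) ≤ _),
            (Nat.cast_nonneg (Nord Q (K-k)) : (0:ℝ) ≤ _)]
        have hwt := wt_tri (Nat.cast_nonneg (Nord Q k) : (0:ℝ) ≤ _)
          (Nat.cast_nonneg (Nord Q (K-k)) : (0:ℝ) ≤ _) hs0
        calc V K ≤ ENNReal.ofReal ((2:ℝ)^s *
              ((1+(Nord Q k:ℝ)^2)^(s/2) + (1+(Nord Q (K-k):ℝ)^2)^(s/2))) :=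
            ENNReal.ofReal_le_ofReal (hmono.trans hwt)
          _ = ENNReal.ofReal ((2:ℝ)^s) * (V k + V (K-k)) := by
              rw [ENNReal.ofReal_mul (by positivity),
                ENNReal.ofReal_add (by positivity) (by positivity)]
      calc V K * (A k * Bg (K-k))
          ≤ (ENNReal.ofReal ((2:ℝ)^s) * (V k + V (K-k))) * (A k * Bg (K-k)) :=
            mul_le_mul_left hVK _
        _ = ENNReal.ofReal ((2:ℝ)^s) * (F k * Bg (K-k) + A k * G (K-k)) := by
            simp only [hF, hG]
            ring
  set S1 : ℂ → ENNReal := fun K => ∑' k, F k * Bg (K-k) with hS1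
  set S2 : ℂ → ENNReal := fun K => ∑' k, A k * G (K-k) with hS2
  have hpt : ∀ K, V K * I K ≤ ENNReal.ofReal ((2:ℝ)^s) * (S1 K + S2 K) := by
    intro K
    simp only [hI]
    rw [← ENNReal.tsum_mul_left]
    calc (∑' k, V K * (A k * Bg (K-k)))
        ≤ ∑' k, ENNReal.ofReal ((2:ℝ)^s) * (F k * Bg (K-k) + A k * G (K-k)) :=
          ENNReal.tsum_le_tsum (htri K)
      _ = ENNReal.ofReal ((2:ℝ)^s) * (S1 K + S2 K) := by
          rw [ENNReal.tsum_mul_left, ENNReal.tsum_add]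
  have hY1 : (∑' K, S1 K^2) ≤ (∑' k, F k^2) * (∑' k, Bg k)^2 := young F Bg hsuppF hsuppB
  have hY2 : (∑' K, S2 K^2) ≤ (∑' k, G k^2) * (∑' k, A k)^2 := by
    have hsw : ∀ K, S2 K = ∑' k, G k * A (K-k) := by
      intro K
      simp only [hS2]
      rw [← (Equiv.subLeft K).tsum_eq (fun k => A k * G (K - k))]
      refine tsum_congr fun k => ?_
      simp only [Equiv.subLeft_apply, sub_sub_cancel]
      ring
    calc (∑' K, S2 K^2) = ∑' K, (∑' k, G k * A (K-k))^2 :=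
        tsum_congr fun K => by rw [hsw]
      _ ≤ (∑' k, G k^2) * (∑' k, A k)^2 := young G A hsuppG hsuppA
  have hl1 : ∀ (T W : ℂ → ENNReal), (∀ k, k ∉ Qlattice Q → T k = 0) →
      (∀ k, W k = V k * T k) → (support W).Countable →
      (∑' k, T k) ≤ Cw ^ (1/2:ℝ) * (∑' k, W k^2)^(1/2:ℝ) := by
    intro T W hTout hWdef hWc
    set u : ℂ → ENNReal := (Qlattice Q).indicator
      (fun k => ENNReal.ofReal ((1+(Nord Q k:ℝ)^2)^(-(s/2)))) with hu
    have hucnt : (support u).Countable := hΓc.mono Set.support_indicator_subset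
    have huT : ∀ k, u k * W k = T k := by
      intro k
      by_cases hk : k ∈ Qlattice Q
      · rw [hWdef k, hu]
        simp only [Set.indicator_of_mem hk]
        rw [← mul_assoc, ← ENNReal.ofReal_mul (Real.rpow_nonneg (by positivity) _)]
        rw [show ((1+(Nord Q k:ℝ)^2)^(-(s/2)) * (1+(Nord Q k:ℝ)^2)^(s/2)) = 1 from by
          rw [← Real.rpow_add (by positivity)]
          norm_num]
        rw [ENNReal.ofReal_one, one_mul]
      · rw [hu]
        simp only [Set.indicator_of_notMem hk, zero_mul]
        exact (hTout k hk).symm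
    have hu2 : (∑' k, u k^2) = Cw := by
      rw [hCw]
      refine tsum_congr fun k => ?_
      by_cases hk : k ∈ Qlattice Q
      · rw [hu]
        simp only [Set.indicator_of_mem hk]
        rw [← ENNReal.ofReal_pow (Real.rpow_nonneg (by positivity) _)]
        congr 1
        rw [← Real.rpow_natCast ((1+(Nord Q k:ℝ)^2)^(-(s/2))) 2,
          ← Real.rpow_mul (by positivity)]
        congr 1
        push_cast
        ring
      · rw [hu]
        simp only [Set.indicator_of_notMem hk]
        simp
    calc (∑' k, T k) = ∑' k, u k * W k := (tsum_congr huT).symm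
      _ ≤ (∑' k, u k^2)^(1/2:ℝ) * (∑' k, W k^2)^(1/2:ℝ) := ennreal_cs u W hucnt hWc
      _ = Cw^(1/2:ℝ) * (∑' k, W k^2)^(1/2:ℝ) := by rw [hu2]
  have hl1B : (∑' k, Bg k) ≤ Cw^(1/2:ℝ) * (∑' k, G k^2)^(1/2:ℝ) :=
    hl1 Bg G hBout (fun k => rfl) hsuppG
  have hl1A : (∑' k, A k) ≤ Cw^(1/2:ℝ) * (∑' k, F k^2)^(1/2:ℝ) :=
    hl1 A F hAout (fun k => rfl) hsuppF
  set c2 : ENNReal := ENNReal.ofReal ((2:ℝ)^s) with hc2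
  have hmain : HnormSq Q s (conv f g) ≤
      (c2^2 * 8 * Cw) * ((∑' k, F k^2) * (∑' k, G k^2)) := by
    calc HnormSq Q s (conv f g) ≤ ∑' K : ℂ, (V K * I K)^2 := hLHS1
      _ ≤ ∑' K : ℂ, (c2 * (S1 K + S2 K))^2 :=
          ENNReal.tsum_le_tsum fun K => by exact pow_le_pow_left₀ zero_le (hpt K) 2
      _ = c2^2 * ∑' K, (S1 K + S2 K)^2 := by
          simp_rw [mul_pow]
          rw [ENNReal.tsum_mul_left]
      _ ≤ c2^2 * ∑' K, 4*(S1 K^2 + S2 K^2) :=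
          mul_le_mul_right (ENNReal.tsum_le_tsum fun K => add_sq_le_four _ _) _
      _ = c2^2 * 4 * ((∑' K, S1 K^2) + (∑' K, S2 K^2)) := by
          rw [ENNReal.tsum_mul_left, ENNReal.tsum_add]
          ring
      _ ≤ c2^2 * 4 * ((∑' k, F k^2) * (∑' k, Bg k)^2 + (∑' k, G k^2) * (∑' k, A k)^2) :=
          mul_le_mul_right (add_le_add hY1 hY2) _
      _ ≤ c2^2 * 4 * ((∑' k, F k^2) * (Cw^(1/2:ℝ) * (∑' k, G k^2)^(1/2:ℝ))^2
            + (∑' k, G k^2) * (Cw^(1/2:ℝ) * (∑' k, F k^2)^(1/2:ℝ))^2) := by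
          refine mul_le_mul_right (add_le_add ?_ ?_) _
          · exact mul_le_mul_right (pow_le_pow_left₀ zero_le hl1B 2) _
          · exact mul_le_mul_right (pow_le_pow_left₀ zero_le hl1A 2) _
      _ = (c2^2 * 8 * Cw) * ((∑' k, F k^2) * (∑' k, G k^2)) := by
          rw [mul_pow, mul_pow, sq_rpow_half, sq_rpow_half, sq_rpow_half]
          ring
  have hHf : HnormSq Q s f = ∑' k, F k^2 := by
    rw [Hnorm_eq Q s f hf]
  have hHg : HnormSq Q s g = ∑' k, G k^2 := by
    rw [Hnorm_eq Q s g hg]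
  have hconst : (c2^2 * 8 * Cw) ≤ ENNReal.ofReal (((2:ℝ)^s)^2 * 8 * (Cw.toReal + 1)) := by
    have h1 : c2^2 = ENNReal.ofReal (((2:ℝ)^s)^2) := by
      rw [hc2, ← ENNReal.ofReal_pow (by positivity)]
    have h2 : Cw ≤ ENNReal.ofReal (Cw.toReal + 1) := by
      conv_lhs => rw [← ENNReal.ofReal_toReal hCwne]
      exact ENNReal.ofReal_le_ofReal (by linarith)
    have h8e : (8:ENNReal) = ENNReal.ofReal (8:ℝ) := by norm_num
    calc c2^2 * 8 * Cw
        ≤ ENNReal.ofReal (((2:ℝ)^s)^2) * ENNReal.ofReal (8:ℝ)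
          * ENNReal.ofReal (Cw.toReal+1) := by
          rw [h1, ← h8e]
          exact mul_le_mul' le_rfl h2
      _ = ENNReal.ofReal (((2:ℝ)^s)^2 * 8 * (Cw.toReal + 1)) := by
          rw [← ENNReal.ofReal_mul (by positivity), ← ENNReal.ofReal_mul (by positivity)]
  have hcsqrt : (c2^2 * 8 * Cw)^(1/2:ℝ) ≤ ENNReal.ofReal c := by
    calc (c2^2*8*Cw)^(1/2:ℝ)
        ≤ (ENNReal.ofReal (((2:ℝ)^s)^2 * 8 * (Cw.toReal + 1)))^(1/2:ℝ) :=
          ENNReal.rpow_le_rpow hconst (by norm_num)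
      _ = ENNReal.ofReal ((((2:ℝ)^s)^2 * 8 * (Cw.toReal + 1))^(1/2:ℝ)) := by
          rw [← ENNReal.ofReal_rpow_of_pos (by positivity)]
      _ = ENNReal.ofReal c := by
          rw [hc, Real.sqrt_eq_rpow]
  calc HnormSq Q s (conv f g) ^ (1/2:ℝ)
      ≤ ((c2^2 * 8 * Cw) * ((∑' k, F k^2) * (∑' k, G k^2)))^(1/2:ℝ) :=
        ENNReal.rpow_le_rpow hmain (by norm_num)
    _ = (c2^2*8*Cw)^(1/2:ℝ) * ((∑' k, F k^2)^(1/2:ℝ) * (∑' k, G k^2)^(1/2:ℝ)) := by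
        rw [ENNReal.mul_rpow_of_nonneg (c2^2*8*Cw) ((∑' k, F k^2) * (∑' k, G k^2))
            (by norm_num : (0:ℝ) ≤ 1/2),
          ENNReal.mul_rpow_of_nonneg (∑' k, F k^2) (∑' k, G k^2)
            (by norm_num : (0:ℝ) ≤ 1/2)]
    _ ≤ ENNReal.ofReal c * ((∑' k, F k^2)^(1/2:ℝ) * (∑' k, G k^2)^(1/2:ℝ)) :=
        mul_le_mul_left hcsqrt _
    _ = ENNReal.ofReal c * HnormSq Q s f ^(1/2:ℝ) * HnormSq Q s g ^(1/2:ℝ) := by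
        rw [hHf, hHg, ← mul_assoc]
end

section
/- For any integer l ≥ 1 and any n ≥ 0, the sum Π_{2,n} = Σ_{k=0}^n (k!(n-k)!)^{4l} satisfies Π_{2,n} ≤ (2 + 1/16)(n!)^{4l}. -/
lemma n_le_choose : ∀ n k : ℕ, 1 ≤ k → k < n → n ≤ n.choose k := by
  intro n
  induction n with
  | zero => omega
  | succ m ih =>
    intro k h1 h2
    rcases eq_or_lt_of_le h1 with h | h
    · simp [← h]
    rcases eq_or_lt_of_le (Nat.lt_succ_iff.mp h2) with h' | h'
    · subst h'
      simp [Nat.choose_succ_self_right]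
    · obtain ⟨j, rfl⟩ : ∃ j, k = j + 1 := ⟨k - 1, by omega⟩
      rw [Nat.choose_succ_succ]
      have h3 : m ≤ m.choose j := ih j (by omega) (by omega)
      have h4 : 1 ≤ m.choose (j + 1) := Nat.choose_pos (by omega)
      exact le_trans (by omega) (Nat.add_le_add h3 h4)

lemma mid_term (l n k : ℕ) (h1 : 1 ≤ k) (h2 : k < n) :
    (Nat.factorial k * Nat.factorial (n - k)) ^ (4 * l) * n ^ (4 * l)
      ≤ (Nat.factorial n) ^ (4 * l) := by
  rw [← Nat.mul_pow]
  apply Nat.pow_le_pow_left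
  calc Nat.factorial k * Nat.factorial (n - k) * n
      = n * (Nat.factorial k * Nat.factorial (n - k)) := by ring
    _ ≤ n.choose k * (Nat.factorial k * Nat.factorial (n - k)) :=
        Nat.mul_le_mul_right _ (n_le_choose n k h1 h2)
    _ = Nat.factorial n := by
        rw [← mul_assoc]
        exact Nat.choose_mul_factorial_mul_factorial (le_of_lt h2)

lemma nat_key (l : ℕ) (hl : 1 ≤ l) (n : ℕ) :
    16 * (∑ k ∈ Finset.range (n + 1),
        (Nat.factorial k * Nat.factorial (n - k)) ^ (4 * l))
      ≤ 33 * (Nat.factorial n) ^ (4 * l) := by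
  rcases Nat.lt_or_ge n 2 with hn | hn
  · interval_cases n <;> simp [Finset.sum_range_succ, Nat.factorial]
  · obtain ⟨m, rfl⟩ : ∃ m, n = m + 2 := ⟨n - 2, by omega⟩
    set n := m + 2 with hn2
    set f : ℕ → ℕ := fun k => (Nat.factorial k * Nat.factorial (n - k)) ^ (4 * l) with hf
    have hN0 : f 0 = (Nat.factorial n) ^ (4 * l) := by simp [hf, Nat.factorial]
    have hNn : f n = (Nat.factorial n) ^ (4 * l) := by simp [hf, Nat.factorial]
    have hsplit : ∑ k ∈ Finset.range (n + 1), f k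
        = (∑ k ∈ Finset.range (m + 1), f (k + 1)) + f n + f 0 := by
      rw [Finset.sum_range_succ' f (n := n)]
      congr 1
      exact Finset.sum_range_succ (fun k => f (k + 1)) (m + 1)
    have hmid : ∀ k ∈ Finset.range (m + 1), f (k + 1) * n ^ (4 * l)
        ≤ (Nat.factorial n) ^ (4 * l) := by
      intro k hk
      simp only [Finset.mem_range] at hk
      exact mid_term l n (k + 1) (by omega) (by omega)
    have hmid2 : (∑ k ∈ Finset.range (m + 1), f (k + 1)) * n ^ (4 * l)
        ≤ (m + 1) * (Nat.factorial n) ^ (4 * l) := by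
      rw [Finset.sum_mul]
      calc ∑ k ∈ Finset.range (m + 1), f (k + 1) * n ^ (4 * l)
          ≤ ∑ _k ∈ Finset.range (m + 1), (Nat.factorial n) ^ (4 * l) :=
            Finset.sum_le_sum hmid
        _ = (m + 1) * (Nat.factorial n) ^ (4 * l) := by
            rw [Finset.sum_const, Finset.card_range, smul_eq_mul]
    have hpow : 16 * (m + 1) ≤ n ^ (4 * l) := by
      calc 16 * (m + 1) ≤ n ^ 4 := by
            have h4 : (m + 2) ^ 4 = m^4 + 8*m^3 + 24*m^2 + 32*m + 16 := by ring
            simp only [hn2]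
            omega
        _ ≤ n ^ (4 * l) := Nat.pow_le_pow_right (by omega) (by omega)
    have hnp : 0 < n ^ (4 * l) := Nat.pow_pos (by omega)
    have hmid3 : 16 * (∑ k ∈ Finset.range (m + 1), f (k + 1))
        ≤ (Nat.factorial n) ^ (4 * l) := by
      apply Nat.le_of_mul_le_mul_right _ hnp
      calc 16 * (∑ k ∈ Finset.range (m + 1), f (k + 1)) * n ^ (4 * l)
          = 16 * ((∑ k ∈ Finset.range (m + 1), f (k + 1)) * n ^ (4 * l)) := by ring
        _ ≤ 16 * ((m + 1) * (Nat.factorial n) ^ (4 * l)) :=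
            Nat.mul_le_mul_left _ hmid2
        _ = (16 * (m + 1)) * (Nat.factorial n) ^ (4 * l) := by ring
        _ ≤ n ^ (4 * l) * (Nat.factorial n) ^ (4 * l) :=
            Nat.mul_le_mul_right _ hpow
        _ = (Nat.factorial n) ^ (4 * l) * n ^ (4 * l) := by ring
    rw [hsplit, hN0, hNn]
    omega

/-- Π_{2,n} = Σ_{k=0}^n (k!(n-k)!)^{4l} ≤ (2 + 1/16)(n!)^{4l}. -/
theorem stmt_12 (l : ℕ) (hl : 1 ≤ l) (n : ℕ) :
    (∑ k ∈ Finset.range (n + 1),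
        ((Nat.factorial k * Nat.factorial (n - k) : ℕ) : ℝ) ^ (4 * l)) ≤
      (2 + 1 / 16) * ((Nat.factorial n : ℕ) : ℝ) ^ (4 * l) := by
  have h := nat_key l hl n
  have hcast : ((16 * (∑ k ∈ Finset.range (n + 1),
      (Nat.factorial k * Nat.factorial (n - k)) ^ (4 * l)) : ℕ) : ℝ)
      ≤ ((33 * (Nat.factorial n) ^ (4 * l) : ℕ) : ℝ) := Nat.cast_le.mpr h
  push_cast at hcast ⊢
  linarith
end

section
/- For any integer l ≥ 1 and any n ≥ 2, the sum Π'_{2,n} = Σ_{k=1}^{n-1} (k!(n-k)!)^{4l} satisfies Π'_{2,n} ≤ 3((n-1)!)^{4l}. -/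
open Finset Nat

lemma fac_mul_fac_le (a : ℕ) : ∀ b, 1 ≤ a → 1 ≤ b →
    a.factorial * b.factorial ≤ (a + b - 1).factorial := by
  intro b ha hb
  induction b with
  | zero => omega
  | succ b ih =>
    rcases Nat.eq_or_lt_of_le hb with h | h
    · have hb0 : b = 0 := by omega
      subst hb0
      simp [Nat.factorial]
    · have hb1 : 1 ≤ b := by omega
      have := ih hb1
      calc a.factorial * (b+1).factorial = (b+1) * (a.factorial * b.factorial) := by
            rw [Nat.factorial_succ]; ring
        _ ≤ (b+1) * (a + b - 1).factorial := Nat.mul_le_mul_left _ this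
        _ ≤ (a + b) * (a + b - 1).factorial := Nat.mul_le_mul_right _ (by omega)
        _ = (a + (b+1) - 1).factorial := by
            have : a + (b+1) - 1 = (a + b - 1) + 1 := by omega
            rw [this, Nat.factorial_succ]
            congr 1 <;> omega

lemma fac_mul_fac_le' (a : ℕ) : ∀ b, 2 ≤ a → 2 ≤ b →
    a.factorial * b.factorial ≤ 2 * (a + b - 2).factorial := by
  intro b ha hb
  induction b with
  | zero => omega
  | succ b ih =>
    rcases Nat.eq_or_lt_of_le hb with h | h
    · have : a + (b+1) - 2 = a := by omega
      rw [this, ← h]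
      simp [Nat.factorial]; ring_nf; omega
    · have hb1 : 2 ≤ b := by omega
      have := ih hb1
      calc a.factorial * (b+1).factorial = (b+1) * (a.factorial * b.factorial) := by
            rw [Nat.factorial_succ]; ring
        _ ≤ (b+1) * (2 * (a + b - 2).factorial) := Nat.mul_le_mul_left _ this
        _ ≤ (a + b - 1) * (2 * (a + b - 2).factorial) := Nat.mul_le_mul_right _ (by omega)
        _ = 2 * ((a + b - 1) * (a + b - 2).factorial) := by ring
        _ = 2 * (a + (b+1) - 2).factorial := by
            have : a + (b+1) - 2 = (a + b - 2) + 1 := by omega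
            rw [this, Nat.factorial_succ]
            congr 2 <;> omega

lemma two_pow_le_three_pow : ∀ j, 2 ≤ j → 2 * 2 ^ j ≤ 3 ^ j := by
  intro j hj
  induction j with
  | zero => omega
  | succ j ih =>
    rcases Nat.eq_or_lt_of_le hj with h | h
    · rw [← h]; norm_num
    · have := ih (by omega)
      calc 2 * 2 ^ (j+1) = 2 * (2 * 2 ^ j) := by ring
        _ ≤ 2 * 3 ^ j := Nat.mul_le_mul_left _ this
        _ ≤ 3 * 3 ^ j := Nat.mul_le_mul_right _ (by omega)
        _ = 3 ^ (j+1) := by ring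

lemma stmt_13_nat (m n : ℕ) (hm : 4 ≤ m) (hn : 2 ≤ n) :
    (∑ k ∈ Finset.Icc 1 (n - 1),
        (Nat.factorial k * Nat.factorial (n - k)) ^ m) ≤
      3 * (Nat.factorial (n - 1)) ^ m := by
  rcases Nat.lt_or_ge n 4 with h4 | h4
  · interval_cases n
    · simp [Nat.factorial]
    · have : Finset.Icc 1 2 = {1, 2} := by decide
      rw [this]
      simp [Nat.factorial]
      try omega
  · -- n ≥ 4
    have hsplit : Finset.Icc 1 (n-1) = insert 1 (insert (n-1) (Finset.Icc 2 (n-2))) := by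
      ext x
      simp [Finset.mem_Icc, Finset.mem_insert]
      omega
    rw [hsplit, Finset.sum_insert, Finset.sum_insert]
    · have e1 : Nat.factorial 1 * Nat.factorial (n - 1) = Nat.factorial (n-1) := by
        simp [Nat.factorial]
      have e2 : Nat.factorial (n-1) * Nat.factorial (n - (n-1)) = Nat.factorial (n-1) := by
        have : n - (n-1) = 1 := by omega
        simp [this, Nat.factorial]
      rw [e1, e2]
      have hint : (∑ k ∈ Finset.Icc 2 (n-2), (Nat.factorial k * Nat.factorial (n - k)) ^ m)
          ≤ (n - 3) * (2 * Nat.factorial (n-2)) ^ m := by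
        have hcard : (Finset.Icc 2 (n-2)).card = n - 3 := by
          rw [Nat.card_Icc]; omega
        calc (∑ k ∈ Finset.Icc 2 (n-2), (Nat.factorial k * Nat.factorial (n - k)) ^ m)
            ≤ ∑ _k ∈ Finset.Icc 2 (n-2), (2 * Nat.factorial (n-2)) ^ m := by
              apply Finset.sum_le_sum
              intro k hk
              simp only [Finset.mem_Icc] at hk
              apply Nat.pow_le_pow_left
              have := fac_mul_fac_le' k (n - k) hk.1 (by omega)
              have hnk : k + (n - k) - 2 = n - 2 := by omega
              rwa [hnk] at this
          _ = (n - 3) * (2 * Nat.factorial (n-2)) ^ m := by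
              rw [Finset.sum_const, hcard, smul_eq_mul]
      have hkey : (n - 3) * (2 * Nat.factorial (n-2)) ^ m ≤ (Nat.factorial (n-1)) ^ m := by
        have hfac : Nat.factorial (n-1) = (n-1) * Nat.factorial (n-2) := by
          have : n - 1 = (n-2) + 1 := by omega
          rw [this, Nat.factorial_succ]
        rw [hfac, mul_pow, mul_pow, ← mul_assoc]
        apply Nat.mul_le_mul_right
        -- (n-3) * 2^m ≤ (n-1)^m
        have h2 : (2:ℕ) ^ m = 2 * 2 ^ (m-1) := by
          obtain ⟨j, rfl⟩ : ∃ j, m = j + 1 := ⟨m - 1, by omega⟩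
          rw [pow_succ, Nat.add_sub_cancel, mul_comm]
        calc (n - 3) * 2 ^ m ≤ (n-1) * 2 ^ m := Nat.mul_le_mul_right _ (by omega)
          _ = (n-1) * (2 * 2 ^ (m-1)) := by rw [h2]
          _ ≤ (n-1) * 3 ^ (m-1) := Nat.mul_le_mul_left _ (two_pow_le_three_pow _ (by omega))
          _ ≤ (n-1) * (n-1) ^ (m-1) := Nat.mul_le_mul_left _ (Nat.pow_le_pow_left (by omega) _)
          _ = (n-1) ^ ((m-1)+1) := by rw [pow_succ]; ring
          _ = (n-1) ^ m := by congr 1 <;> omega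
      calc Nat.factorial (n-1) ^ m + (Nat.factorial (n-1) ^ m +
            ∑ k ∈ Finset.Icc 2 (n-2), (Nat.factorial k * Nat.factorial (n - k)) ^ m)
          ≤ Nat.factorial (n-1) ^ m + (Nat.factorial (n-1) ^ m + Nat.factorial (n-1) ^ m) :=
            Nat.add_le_add_left (Nat.add_le_add_left (le_trans hint hkey) _) _
        _ = 3 * Nat.factorial (n-1) ^ m := by ring
    · simp [Finset.mem_Icc]; omega
    · simp [Finset.mem_Icc]; omega

/-- Π'_{2,n} = Σ_{k=1}^{n-1} (k!(n-k)!)^{4l} ≤ 3((n-1)!)^{4l} for n ≥ 2. -/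
theorem stmt_13 (l : ℕ) (hl : 1 ≤ l) (n : ℕ) (hn : 2 ≤ n) :
    (∑ k ∈ Finset.Icc 1 (n - 1),
        ((Nat.factorial k * Nat.factorial (n - k) : ℕ) : ℝ) ^ (4 * l)) ≤
      3 * ((Nat.factorial (n - 1) : ℕ) : ℝ) ^ (4 * l) := by
  have h := stmt_13_nat (4 * l) n (by omega) hn
  have := (Nat.cast_le (α := ℝ)).2 h
  push_cast at this ⊢
  exact this
end

section
/- For any integer l ≥ 1 and any n ≥ 1, the sum Π_{3,n} = Σ_{k+m+r=n, k,m,r≥0} (k!m!r!)^{4l} over ordered triples of nonnegative integers summing to n satisfies Π_{3,n} ≤ 4(n!)^{4l}. -/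
lemma n_le_choose_half (n a : ℕ) (h1 : 1 ≤ a) (h2 : a ≤ n / 2) : n ≤ n.choose a := by
  induction a with
  | zero => omega
  | succ b ih =>
    rcases Nat.eq_or_lt_of_le h1 with h | h
    · have hb : b = 0 := by omega
      subst hb
      simp [Nat.choose_one_right]
    · have hb : 1 ≤ b := by omega
      have h3 : n ≤ n.choose b := ih hb (by omega)
      exact h3.trans (Nat.choose_le_succ_of_lt_half_left (by omega))

lemma n_le_choose_s14 (n a : ℕ) (h1 : 1 ≤ a) (h2 : a < n) : n ≤ n.choose a := by
  rcases le_or_gt a (n / 2) with h | h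
  · exact n_le_choose_half n a h1 h
  · have h3 : n - a ≤ n / 2 := by omega
    rw [← Nat.choose_symm (le_of_lt h2)]
    exact n_le_choose_half n (n - a) (by omega) h3

lemma aux_fac (n a b c : ℕ) (h1 : 1 ≤ a) (h2 : a < n) (h : a + b + c = n) :
    n * (a.factorial * b.factorial * c.factorial) ≤ n.factorial := by
  have hbc : b.factorial * c.factorial ≤ (b + c).factorial :=
    Nat.le_of_dvd (b + c).factorial_pos (Nat.factorial_mul_factorial_dvd_factorial_add b c)
  have key : n.choose a * a.factorial * (n - a).factorial = n.factorial :=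
    Nat.choose_mul_factorial_mul_factorial (le_of_lt h2)
  have hna : n - a = b + c := by omega
  calc n * (a.factorial * b.factorial * c.factorial)
      ≤ n * (a.factorial * (n - a).factorial) := by
        apply Nat.mul_le_mul_left
        rw [hna, mul_assoc]
        exact Nat.mul_le_mul_left _ hbc
    _ ≤ n.choose a * (a.factorial * (n - a).factorial) :=
        Nat.mul_le_mul_right _ (n_le_choose_s14 n a h1 h2)
    _ = n.factorial := by rw [← key]; ring

lemma real_term_le (n p t : ℕ) (hn : 1 ≤ n) (h : n * t ≤ n.factorial) :
    ((t : ℕ) : ℝ) ^ p ≤ ((n.factorial : ℕ) : ℝ) ^ p / (n : ℝ) ^ p := by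
  have hnp : (0 : ℝ) < (n : ℝ) ^ p := by positivity
  rw [le_div_iff₀ hnp]
  have h2 : ((n * t : ℕ) : ℝ) ^ p ≤ ((n.factorial : ℕ) : ℝ) ^ p := by
    apply pow_le_pow_left₀ (by positivity)
    exact_mod_cast h
  calc ((t : ℕ) : ℝ) ^ p * (n : ℝ) ^ p = ((n * t : ℕ) : ℝ) ^ p := by push_cast; ring
    _ ≤ _ := h2

/-- Π_{3,n} = Σ_{k+m+r=n} (k!m!r!)^{4l} ≤ 4(n!)^{4l} for n ≥ 1,
the sum being over ordered triples of nonnegative integers with k+m+r = n. -/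
theorem stmt_14 (l : ℕ) (hl : 1 ≤ l) (n : ℕ) (hn : 1 ≤ n) :
    (∑ k ∈ Finset.range (n + 1), ∑ m ∈ Finset.range (n + 1 - k),
        ((Nat.factorial k * Nat.factorial m * Nat.factorial (n - k - m) : ℕ) : ℝ)
          ^ (4 * l)) ≤
      4 * ((Nat.factorial n : ℕ) : ℝ) ^ (4 * l) := by
  obtain ⟨N, rfl⟩ : ∃ N, n = N + 1 := ⟨n - 1, by omega⟩
  set p := 4 * l with hp
  have hp4 : 4 ≤ p := by omega
  set A : ℝ := ((Nat.factorial (N + 1) : ℕ) : ℝ) ^ p with hA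
  set B : ℝ := A / ((N + 1 : ℕ) : ℝ) ^ p with hB
  have hApos : 0 < A := by positivity
  have hBpos : 0 < B := by positivity
  have hBA : ((N : ℝ) + 1) ^ 2 * B ≤ A := by
    rw [hB]
    have h1 : ((N : ℝ) + 1) ^ 2 ≤ ((N + 1 : ℕ) : ℝ) ^ p := by
      push_cast
      exact pow_le_pow_right₀ (by linarith [Nat.cast_nonneg (α := ℝ) N]) (by omega)
    calc ((N : ℝ) + 1) ^ 2 * (A / ((N + 1 : ℕ) : ℝ) ^ p)
        ≤ ((N + 1 : ℕ) : ℝ) ^ p * (A / ((N + 1 : ℕ) : ℝ) ^ p) := by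
          apply mul_le_mul_of_nonneg_right h1 (le_of_lt (by positivity))
      _ = A := by field_simp
  -- term bound for non-corner triples
  have term_le : ∀ k m : ℕ, 1 ≤ k + m → k + m ≤ N + 1 → k ≤ N → m ≤ N →
      ((Nat.factorial k * Nat.factorial m * Nat.factorial (N + 1 - k - m) : ℕ) : ℝ) ^ p ≤ B := by
    intro k m h1 h2 hk hm
    rcases Nat.eq_zero_or_pos k with hk0 | hk1
    · subst hk0
      have hm1 : 1 ≤ m := by omega
      have hnat : (N + 1) * (Nat.factorial 0 * Nat.factorial m *
          Nat.factorial (N + 1 - 0 - m)) ≤ Nat.factorial (N + 1) := by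
        have := aux_fac (N + 1) m (N + 1 - m) 0 hm1 (by omega) (by omega)
        simp only [Nat.factorial_zero] at this ⊢
        have he : N + 1 - 0 - m = N + 1 - m := by omega
        rw [he]
        calc (N + 1) * (1 * Nat.factorial m * Nat.factorial (N + 1 - m))
            = (N + 1) * (Nat.factorial m * Nat.factorial (N + 1 - m) * 1) := by ring
          _ ≤ _ := this
      exact real_term_le (N + 1) p _ (by omega) hnat
    · have hnat : (N + 1) * (Nat.factorial k * Nat.factorial m *
          Nat.factorial (N + 1 - k - m)) ≤ Nat.factorial (N + 1) :=
        aux_fac (N + 1) k m (N + 1 - k - m) hk1 (by omega) (by omega)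
      exact real_term_le (N + 1) p _ (by omega) hnat
  -- corner values
  have corner0 : ((Nat.factorial 0 * Nat.factorial 0 *
      Nat.factorial (N + 1 - 0 - 0) : ℕ) : ℝ) ^ p = A := by
    simp [hA]
  have corner1 : ((Nat.factorial 0 * Nat.factorial (N + 1) *
      Nat.factorial (N + 1 - 0 - (N + 1)) : ℕ) : ℝ) ^ p = A := by
    have he : N + 1 - 0 - (N + 1) = 0 := by omega
    rw [he]
    simp [hA]
  have corner2 : ((Nat.factorial (N + 1) * Nat.factorial 0 *
      Nat.factorial (N + 1 - (N + 1) - 0) : ℕ) : ℝ) ^ p = A := by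
    have he : N + 1 - (N + 1) - 0 = 0 := by omega
    rw [he]
    simp [hA]
  -- inner sum bounds
  have I_top : (∑ m ∈ Finset.range (N + 1 + 1 - (N + 1)),
      ((Nat.factorial (N + 1) * Nat.factorial m *
        Nat.factorial (N + 1 - (N + 1) - m) : ℕ) : ℝ) ^ p) = A := by
    have he : N + 1 + 1 - (N + 1) = 1 := by omega
    rw [he, Finset.sum_range_one, corner2]
  have I_zero : (∑ m ∈ Finset.range (N + 1 + 1 - 0),
      ((Nat.factorial 0 * Nat.factorial m *
        Nat.factorial (N + 1 - 0 - m) : ℕ) : ℝ) ^ p) ≤ 2 * A + (N : ℝ) * B := by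
    have he : N + 1 + 1 - 0 = (N + 1) + 1 := by omega
    rw [he, Finset.sum_range_succ, Finset.sum_range_succ', corner0, corner1]
    have hmid : (∑ m ∈ Finset.range N,
        ((Nat.factorial 0 * Nat.factorial (m + 1) *
          Nat.factorial (N + 1 - 0 - (m + 1)) : ℕ) : ℝ) ^ p) ≤ (N : ℝ) * B := by
      calc _ ≤ ∑ _m ∈ Finset.range N, B := by
            apply Finset.sum_le_sum
            intro m hm
            simp only [Finset.mem_range] at hm
            exact term_le 0 (m + 1) (by omega) (by omega) (by omega) (by omega)
        _ = (N : ℝ) * B := by simp [mul_comm]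
    linarith
  have I_mid : ∀ k ∈ Finset.range N,
      (∑ m ∈ Finset.range (N + 1 + 1 - (k + 1)),
        ((Nat.factorial (k + 1) * Nat.factorial m *
          Nat.factorial (N + 1 - (k + 1) - m) : ℕ) : ℝ) ^ p) ≤ ((N : ℝ) + 1) * B := by
    intro k hk
    simp only [Finset.mem_range] at hk
    calc _ ≤ ∑ _m ∈ Finset.range (N + 1 + 1 - (k + 1)), B := by
          apply Finset.sum_le_sum
          intro m hm
          simp only [Finset.mem_range] at hm
          exact term_le (k + 1) m (by omega) (by omega) (by omega) (by omega)
      _ = ((N + 1 + 1 - (k + 1) : ℕ) : ℝ) * B := by simp [mul_comm]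
      _ ≤ ((N : ℝ) + 1) * B := by
          apply mul_le_mul_of_nonneg_right _ (le_of_lt hBpos)
          have : (N + 1 + 1 - (k + 1) : ℕ) ≤ N + 1 := by omega
          calc ((N + 1 + 1 - (k + 1) : ℕ) : ℝ) ≤ ((N + 1 : ℕ) : ℝ) := by exact_mod_cast this
            _ = (N : ℝ) + 1 := by push_cast; ring
  -- assemble
  rw [Finset.sum_range_succ, Finset.sum_range_succ']
  have hmidsum : (∑ k ∈ Finset.range N,
      ∑ m ∈ Finset.range (N + 1 + 1 - (k + 1)),
        ((Nat.factorial (k + 1) * Nat.factorial m *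
          Nat.factorial (N + 1 - (k + 1) - m) : ℕ) : ℝ) ^ p) ≤ (N : ℝ) * (((N : ℝ) + 1) * B) := by
    calc _ ≤ ∑ _k ∈ Finset.range N, ((N : ℝ) + 1) * B := Finset.sum_le_sum I_mid
      _ = (N : ℝ) * (((N : ℝ) + 1) * B) := by simp [mul_comm]
  have hNB : (N : ℝ) * (((N : ℝ) + 1) * B) + (N : ℝ) * B ≤ ((N : ℝ) + 1) ^ 2 * B := by
    have hN0 : (0 : ℝ) ≤ (N : ℝ) := Nat.cast_nonneg N
    nlinarith [hBpos.le]
  rw [I_top]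
  linarith [I_zero, hmidsum, hBA]
end

section
/- For any integer l ≥ 1 and any n ≥ 2, the sum Π'_{3,n} = Σ_{k+m+r=n, 0≤k,m,r≤n-1} (k!m!r!)^{4l} over ordered triples of nonnegative integers summing to n with each part at most n-1 satisfies Π'_{3,n} ≤ 10((n-1)!)^{4l}. -/
lemma choose_mono_half {n r s : ℕ} (hrs : r ≤ s) (hs : s ≤ n / 2) :
    n.choose r ≤ n.choose s := by
  induction hrs using Nat.decreasingInduction with
  | self => rfl
  | of_succ k hk ih =>
      exact (Nat.choose_le_succ_of_lt_half_left (lt_of_lt_of_le hk hs)).trans ih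

lemma choose_ge {n r a : ℕ} (h1 : r ≤ a) (h2 : a + r ≤ n) :
    n.choose r ≤ n.choose a := by
  rcases le_or_gt a (n / 2) with h | h
  · exact choose_mono_half h1 h
  · have ha : a ≤ n := by omega
    rw [← Nat.choose_symm ha]
    exact choose_mono_half (by omega) (by omega)

lemma fac_helper {n r a : ℕ} (h1 : r ≤ a) (h2 : a + r ≤ n) :
    a.factorial * (n - a).factorial ≤ r.factorial * (n - r).factorial := by
  have ha : a ≤ n := by omega
  have hr : r ≤ n := by omega
  have e1 := Nat.choose_mul_factorial_mul_factorial ha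
  have e2 := Nat.choose_mul_factorial_mul_factorial hr
  have hc := choose_ge h1 h2
  have hpos : 0 < n.choose r := Nat.choose_pos hr
  have key : n.choose r * (a.factorial * (n - a).factorial)
      ≤ n.choose r * (r.factorial * (n - r).factorial) := by
    calc n.choose r * (a.factorial * (n - a).factorial)
        ≤ n.choose a * (a.factorial * (n - a).factorial) :=
          Nat.mul_le_mul_right _ hc
      _ = n.factorial := by rw [← e1]; ring
      _ = n.choose r * (r.factorial * (n - r).factorial) := by rw [← e2]; ring
  exact Nat.le_of_mul_le_mul_left key hpos

lemma facmul_le {b c : ℕ} : b.factorial * c.factorial ≤ (b + c).factorial :=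
  Nat.le_of_dvd (Nat.factorial_pos _) (Nat.factorial_mul_factorial_dvd_factorial_add b c)

lemma triple_bound {n r a b c : ℕ} (h : a + b + c = n) (h1 : r ≤ a) (h2 : a + r ≤ n) :
    a.factorial * b.factorial * c.factorial ≤ r.factorial * (n - r).factorial := by
  calc a.factorial * b.factorial * c.factorial
      = a.factorial * (b.factorial * c.factorial) := by ring
    _ ≤ a.factorial * (b + c).factorial := Nat.mul_le_mul_left _ facmul_le
    _ = a.factorial * (n - a).factorial := by
        congr 1; congr 1; omega
    _ ≤ r.factorial * (n - r).factorial := fac_helper h1 h2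

lemma L1 {n a b c : ℕ} (h : a + b + c = n) (hn : 2 ≤ n)
    (ha : a ≤ n - 1) (hb : b ≤ n - 1) (hc : c ≤ n - 1) :
    a.factorial * b.factorial * c.factorial ≤ (n - 1).factorial := by
  have h1 : (1 : ℕ).factorial * (n - 1).factorial = (n - 1).factorial := by
    simp [Nat.factorial]
  rcases Nat.eq_zero_or_pos a with ha0 | ha1
  · rcases Nat.eq_zero_or_pos b with hb0 | hb1
    · omega
    · have := triple_bound (show b + a + c = n by omega) hb1 (by omega)
      calc a.factorial * b.factorial * c.factorial
          = b.factorial * a.factorial * c.factorial := by ring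
        _ ≤ (1 : ℕ).factorial * (n - 1).factorial := this
        _ = (n - 1).factorial := h1
  · have := triple_bound h ha1 (by omega)
    calc a.factorial * b.factorial * c.factorial
        ≤ (1 : ℕ).factorial * (n - 1).factorial := this
      _ = (n - 1).factorial := h1

lemma L2 {n a b c : ℕ} (h : a + b + c = n) (hn : 5 ≤ n)
    (ha : a ≤ n - 2) (hb : b ≤ n - 2) (hc : c ≤ n - 2) :
    a.factorial * b.factorial * c.factorial ≤ 2 * (n - 2).factorial := by
  have h2 : (2 : ℕ).factorial * (n - 2).factorial = 2 * (n - 2).factorial := by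
    simp [Nat.factorial]
  rcases le_or_gt 2 a with ha2 | ha2
  · have := triple_bound h ha2 (by omega)
    calc a.factorial * b.factorial * c.factorial
        ≤ (2 : ℕ).factorial * (n - 2).factorial := this
      _ = 2 * (n - 2).factorial := h2
  rcases le_or_gt 2 b with hb2 | hb2
  · have := triple_bound (show b + a + c = n by omega) hb2 (by omega)
    calc a.factorial * b.factorial * c.factorial
        = b.factorial * a.factorial * c.factorial := by ring
      _ ≤ (2 : ℕ).factorial * (n - 2).factorial := this
      _ = 2 * (n - 2).factorial := h2
  · have hc2 : 2 ≤ c := by omega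
    have := triple_bound (show c + a + b = n by omega) hc2 (by omega)
    calc a.factorial * b.factorial * c.factorial
        = c.factorial * a.factorial * b.factorial := by ring
      _ ≤ (2 : ℕ).factorial * (n - 2).factorial := this
      _ = 2 * (n - 2).factorial := h2

lemma key_nat (n : ℕ) (hn : 2 ≤ n) :
    (∑ p ∈ (Finset.range (n + 1) ×ˢ Finset.range (n + 1)).filter
        (fun p => p.1 + p.2 ≤ n ∧ p.1 ≤ n - 1 ∧ p.2 ≤ n - 1 ∧ n - p.1 - p.2 ≤ n - 1),
        (Nat.factorial p.1 * Nat.factorial p.2 * Nat.factorial (n - p.1 - p.2)) ^ 4)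
      ≤ 10 * ((n - 1).factorial) ^ 4 := by
  have hcase : n = 2 ∨ n = 3 ∨ n = 4 ∨ 5 ≤ n := by omega
  rcases hcase with rfl | rfl | rfl | hn5
  · decide
  · decide
  · decide
  set F := (Finset.range (n + 1) ×ˢ Finset.range (n + 1)).filter
      (fun p => p.1 + p.2 ≤ n ∧ p.1 ≤ n - 1 ∧ p.2 ≤ n - 1 ∧ n - p.1 - p.2 ≤ n - 1) with hF
  set P : ℕ × ℕ → Prop := fun p => n - 1 ≤ p.1 ∨ n - 1 ≤ p.2 ∨ n - 1 ≤ n - p.1 - p.2 with hP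
  set f : ℕ × ℕ → ℕ := fun p =>
      (Nat.factorial p.1 * Nat.factorial p.2 * Nat.factorial (n - p.1 - p.2)) ^ 4 with hf
  have hsplit := Finset.sum_filter_add_sum_filter_not F P f
  rw [← hsplit]
  -- bound the extremal part
  have hEsub : F.filter P ⊆
      ({(n-1,1),(n-1,0),(1,n-1),(0,n-1),(1,0),(0,1)} : Finset (ℕ × ℕ)) := by
    intro p hp
    obtain ⟨k, m⟩ := p
    simp only [hF, hP, Finset.mem_filter, Finset.mem_product, Finset.mem_range] at hp
    simp only [Finset.mem_insert, Finset.mem_singleton, Prod.ext_iff]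
    omega
  have hcardE : (F.filter P).card ≤ 6 := by
    refine (Finset.card_le_card hEsub).trans ?_
    have : ({(n-1,1),(n-1,0),(1,n-1),(0,n-1),(1,0),(0,1)} : Finset (ℕ × ℕ))
        = [(n-1,1),(n-1,0),(1,n-1),(0,n-1),(1,0),(0,1)].toFinset := by simp
    rw [this]
    exact (List.toFinset_card_le _).trans (by simp)
  have hE : ∑ p ∈ F.filter P, f p ≤ 6 * ((n - 1).factorial) ^ 4 := by
    have hterm : ∀ p ∈ F.filter P, f p ≤ ((n - 1).factorial) ^ 4 := by
      intro p hp
      obtain ⟨k, m⟩ := p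
      have hp' := Finset.mem_filter.mp hp |>.1
      simp only [hF, Finset.mem_filter, Finset.mem_product, Finset.mem_range] at hp'
      obtain ⟨-, hsum, h1, h2, h3⟩ := hp'
      exact Nat.pow_le_pow_left (L1 (by omega) (by omega) h1 h2 h3) 4
    calc ∑ p ∈ F.filter P, f p ≤ (F.filter P).card • ((n - 1).factorial) ^ 4 :=
          Finset.sum_le_card_nsmul _ _ _ hterm
      _ = (F.filter P).card * ((n - 1).factorial) ^ 4 := by rw [smul_eq_mul]
      _ ≤ 6 * ((n - 1).factorial) ^ 4 := Nat.mul_le_mul_right _ hcardE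
  -- bound the rest
  have hcardR : (F.filter (fun p => ¬ P p)).card ≤ (n + 1) * (n + 1) := by
    refine (Finset.card_filter_le _ _).trans ?_
    refine (Finset.card_filter_le _ _).trans ?_
    simp [Finset.card_product]
  have hR : ∑ p ∈ F.filter (fun p => ¬ P p), f p
      ≤ (n + 1) * (n + 1) * (2 * (n - 2).factorial) ^ 4 := by
    have hterm : ∀ p ∈ F.filter (fun p => ¬ P p), f p ≤ (2 * (n - 2).factorial) ^ 4 := by
      intro p hp
      obtain ⟨k, m⟩ := p
      have hp' := Finset.mem_filter.mp hp
      have hp1 := hp'.1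
      have hp2 := hp'.2
      simp only [hF, Finset.mem_filter, Finset.mem_product, Finset.mem_range] at hp1
      simp only [hP, not_or, not_le] at hp2
      obtain ⟨-, hsum, h1, h2, h3⟩ := hp1
      obtain ⟨g1, g2, g3⟩ := hp2
      exact Nat.pow_le_pow_left
        (L2 (show k + m + (n - k - m) = n by omega) hn5 (by omega) (by omega) (by omega)) 4
    calc ∑ p ∈ F.filter (fun p => ¬ P p), f p
        ≤ (F.filter (fun p => ¬ P p)).card • (2 * (n - 2).factorial) ^ 4 :=
          Finset.sum_le_card_nsmul _ _ _ hterm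
      _ = (F.filter (fun p => ¬ P p)).card * (2 * (n - 2).factorial) ^ 4 := by rw [smul_eq_mul]
      _ ≤ (n + 1) * (n + 1) * (2 * (n - 2).factorial) ^ 4 := Nat.mul_le_mul_right _ hcardR
  have hfac : (n - 1).factorial = (n - 1) * (n - 2).factorial := by
    have : n - 1 = (n - 2) + 1 := by omega
    rw [this, Nat.factorial_succ]
  have harith : (n + 1) * (n + 1) * (2 * (n - 2).factorial) ^ 4
      ≤ 4 * ((n - 1).factorial) ^ 4 := by
    rw [hfac, mul_pow, mul_pow]
    have hpoly : (n + 1) * (n + 1) * 2 ^ 4 ≤ 4 * (n - 1) ^ 4 := by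
      have h5 : 5 ≤ n := hn5
      set m := n - 1 with hm
      have hm4 : 4 ≤ m := by omega
      have hn' : n = m + 1 := by omega
      rw [hn']
      have hA : m + 1 + 1 ≤ 2 * m := by omega
      have h16 : 16 ≤ m * m := Nat.mul_le_mul hm4 hm4
      calc (m + 1 + 1) * (m + 1 + 1) * 2 ^ 4
          ≤ (2 * m) * (2 * m) * 2 ^ 4 :=
            Nat.mul_le_mul_right _ (Nat.mul_le_mul hA hA)
        _ = 4 * (16 * (m * m)) := by ring
        _ ≤ 4 * ((m * m) * (m * m)) :=
            Nat.mul_le_mul_left _ (Nat.mul_le_mul_right _ h16)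
        _ = 4 * m ^ 4 := by ring
    calc (n + 1) * (n + 1) * (2 ^ 4 * ((n - 2).factorial) ^ 4)
        = (n + 1) * (n + 1) * 2 ^ 4 * ((n - 2).factorial) ^ 4 := by ring
      _ ≤ 4 * (n - 1) ^ 4 * ((n - 2).factorial) ^ 4 :=
          Nat.mul_le_mul_right _ hpoly
      _ = 4 * ((n - 1) ^ 4 * ((n - 2).factorial) ^ 4) := by ring
  calc ∑ p ∈ F.filter P, f p + ∑ p ∈ F.filter (fun p => ¬ P p), f p
      ≤ 6 * ((n - 1).factorial) ^ 4 + 4 * ((n - 1).factorial) ^ 4 :=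
        Nat.add_le_add hE (hR.trans harith)
    _ = 10 * ((n - 1).factorial) ^ 4 := by ring

/-- Π'_{3,n} = Σ_{k+m+r=n, 0≤k,m,r≤n-1} (k!m!r!)^{4l} ≤ 10((n-1)!)^{4l}
for n ≥ 2, the sum being over ordered triples with no part equal to n. -/
theorem stmt_15 (l : ℕ) (hl : 1 ≤ l) (n : ℕ) (hn : 2 ≤ n) :
    (∑ p ∈ (Finset.range (n + 1) ×ˢ Finset.range (n + 1)).filter
        (fun p => p.1 + p.2 ≤ n ∧ p.1 ≤ n - 1 ∧ p.2 ≤ n - 1 ∧ n - p.1 - p.2 ≤ n - 1),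
        ((Nat.factorial p.1 * Nat.factorial p.2 * Nat.factorial (n - p.1 - p.2) : ℕ) : ℝ)
          ^ (4 * l)) ≤
      10 * ((Nat.factorial (n - 1) : ℕ) : ℝ) ^ (4 * l) := by
  have hnat : (∑ p ∈ (Finset.range (n + 1) ×ˢ Finset.range (n + 1)).filter
        (fun p => p.1 + p.2 ≤ n ∧ p.1 ≤ n - 1 ∧ p.2 ≤ n - 1 ∧ n - p.1 - p.2 ≤ n - 1),
        (Nat.factorial p.1 * Nat.factorial p.2 * Nat.factorial (n - p.1 - p.2)) ^ (4 * l))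
      ≤ 10 * ((n - 1).factorial) ^ (4 * l) := by
    set F := (Finset.range (n + 1) ×ˢ Finset.range (n + 1)).filter
        (fun p => p.1 + p.2 ≤ n ∧ p.1 ≤ n - 1 ∧ p.2 ≤ n - 1 ∧ n - p.1 - p.2 ≤ n - 1) with hF
    set M := (n - 1).factorial with hM
    have h4l : 4 * l = 4 + (4 * l - 4) := by omega
    have hterm : ∀ p ∈ F,
        (Nat.factorial p.1 * Nat.factorial p.2 * Nat.factorial (n - p.1 - p.2)) ^ (4 * l)
          ≤ (Nat.factorial p.1 * Nat.factorial p.2 * Nat.factorial (n - p.1 - p.2)) ^ 4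
              * M ^ (4 * l - 4) := by
      intro p hp
      obtain ⟨k, m⟩ := p
      have hp' := hp
      simp only [hF, Finset.mem_filter, Finset.mem_product, Finset.mem_range] at hp'
      obtain ⟨-, hsum, h1, h2, h3⟩ := hp'
      have hx : Nat.factorial k * Nat.factorial m * Nat.factorial (n - k - m) ≤ M :=
        L1 (by omega) hn h1 h2 h3
      calc (Nat.factorial k * Nat.factorial m * Nat.factorial (n - k - m)) ^ (4 * l)
          = (Nat.factorial k * Nat.factorial m * Nat.factorial (n - k - m)) ^ 4
              * (Nat.factorial k * Nat.factorial m * Nat.factorial (n - k - m)) ^ (4 * l - 4) := by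
            rw [← pow_add, ← h4l]
        _ ≤ (Nat.factorial k * Nat.factorial m * Nat.factorial (n - k - m)) ^ 4
              * M ^ (4 * l - 4) :=
            Nat.mul_le_mul_left _ (Nat.pow_le_pow_left hx _)
    calc (∑ p ∈ F,
          (Nat.factorial p.1 * Nat.factorial p.2 * Nat.factorial (n - p.1 - p.2)) ^ (4 * l))
        ≤ ∑ p ∈ F,
            (Nat.factorial p.1 * Nat.factorial p.2 * Nat.factorial (n - p.1 - p.2)) ^ 4
              * M ^ (4 * l - 4) := Finset.sum_le_sum hterm
      _ = (∑ p ∈ F,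
            (Nat.factorial p.1 * Nat.factorial p.2 * Nat.factorial (n - p.1 - p.2)) ^ 4)
              * M ^ (4 * l - 4) := (Finset.sum_mul _ _ _).symm
      _ ≤ (10 * M ^ 4) * M ^ (4 * l - 4) := Nat.mul_le_mul_right _ (key_nat n hn)
      _ = 10 * M ^ (4 * l) := by rw [mul_assoc, ← pow_add, ← h4l]
  exact_mod_cast hnat
end

section
/- Let û be analytic on the disc {|z| < 1/K₁} with û(0) = 0, let K' > K₁, and define (L_{K'}û)(ν) = (1/ν)∫₀^{1/K'} e^{-z/ν} û(z) dz and the (truncated-domain) triple convolution of û with itself corresponding to the Borel transform of the cube. Then for 0 < ν < 1/K': |(L_{K'}(û*û*û))(ν) - ((L_{K'}û)(ν))³| ≤ e^{-1/(K'ν)}/(K'ν)³ · ||û||₀(||û||₀ + ν||û||₁)², where ||û||₀ = sup_{(0,1/K')}|û| and ||û||₁ = sup_{(0,1/K')}|û'|. Here (L_{K'}(û*û*û))(ν) = (1/ν)∫_{D_{K'}} e^{-(z₁+z₂+z₃)/ν} û'(z₁)û'(z₂)û(z₃) dz₁dz₂dz₃ with D_{K'} = {z₁,z₂,z₃ > 0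 : z₁+z₂+z₃ < 1/K'}. -/
set_option maxHeartbeats 4000000
open intervalIntegral in
lemma expE (ν b c : ℝ) (hν : 0 < ν) :
    ∫ x in b..c, Real.exp (-x/ν) = ν * (Real.exp (-b/ν) - Real.exp (-c/ν)) := by
  have h : ∀ x ∈ Set.uIcc b c, HasDerivAt (fun y => -ν * Real.exp (-y/ν)) (Real.exp (-x/ν)) x := by
    intro x _
    have h1 : HasDerivAt (fun y : ℝ => -y/ν) (-1/ν) x := by
      simpa using ((hasDerivAt_id x).neg.div_const ν)
    have h2 := (h1.exp).const_mul (-ν)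
    have hν0 : ν ≠ 0 := hν.ne'
    rw [show -ν * (Real.exp (-x / ν) * (-1 / ν)) = Real.exp (-x / ν) * (ν / ν) by ring, div_self hν0, mul_one] at h2
    exact h2
  rw [intervalIntegral.integral_eq_sub_of_hasDerivAt h
    ((Real.continuous_exp.comp (by continuity)).intervalIntegrable _ _)]
  ring

open intervalIntegral in
lemma normBound (ν : ℝ) (hν : 0 < ν) (c : ℝ → ℂ) (hc : Continuous c) (M b d : ℝ)
    (hbd : b ≤ d) (h : ∀ x, ‖c x‖ ≤ M * Real.exp (-x/ν)) :
    ‖∫ x in b..d, c x‖ ≤ M * (ν * (Real.exp (-b/ν) - Real.exp (-d/ν))) := by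
  calc ‖∫ x in b..d, c x‖ ≤ ∫ x in b..d, ‖c x‖ :=
        intervalIntegral.norm_integral_le_integral_norm hbd
  _ ≤ ∫ x in b..d, M * Real.exp (-x/ν) := by
      apply intervalIntegral.integral_mono_on hbd (hc.norm.intervalIntegrable _ _)
        ((continuous_const.mul (Real.continuous_exp.comp (by continuity))).intervalIntegrable _ _)
      exact fun x _ => h x
  _ = M * (ν * (Real.exp (-b/ν) - Real.exp (-d/ν))) := by
      rw [intervalIntegral.integral_const_mul, expE ν b d hν]
lemma auxFinal (a ν M₀ M₁ : ℝ) (hν : 0 < ν) (hνa : ν < a) (hM₀ : 0 ≤ M₀) (hM₁ : 0 ≤ M₁) :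
    M₀*M₁^2*(Real.exp (-a/ν)*(a^2/2 + ν*a - ν^2*((1 - Real.exp (-a/ν))*(2 - Real.exp (-a/ν)))))
      + Real.exp (-a/ν) * M₀ * (M₀ * (M₀ + ν*M₁))
    ≤ Real.exp (-a/ν) * (a^3/ν^3) * (M₀*(M₀+ν*M₁)^2) := by
  set ε := Real.exp (-a/ν) with hε_def
  have hε0 : 0 < ε := Real.exp_pos _
  have hε38 : ε ≤ 0.38 := by
    have h1 : ε ≤ Real.exp (-1) := by
      apply Real.exp_le_exp.2
      rw [neg_div, neg_le_neg_iff, le_div_iff₀ hν]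
      linarith
    have h3 : (2.7182818283 : ℝ) < Real.exp 1 := Real.exp_one_gt_d9
    have h4 : Real.exp (-1) ≤ 0.38 := by
      rw [Real.exp_neg, inv_le_comm₀ (Real.exp_pos 1) (by norm_num)]
      nlinarith
    linarith
  have hcorr : 1 ≤ (1-ε)*(2-ε) := by nlinarith
  have hν3 : ν^3 ≤ a^3 := by nlinarith [sq_nonneg (a+ν), sq_nonneg (a-ν)]
  have hν4 : ν^4 ≤ a^3*ν := by nlinarith
  have hkey : ν*a^2/2 + ν^2*a - ν^3*((1-ε)*(2-ε)) ≤ a^3 := by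
    have h5 : ν*a^2/2 + ν^2*a - ν^3 ≤ a^3 := by nlinarith [sq_nonneg (a-ν), mul_pos hν hν, mul_nonneg (mul_nonneg hν.le hν.le) (sub_nonneg.2 hνa.le)]
    nlinarith [mul_pos (mul_pos hν hν) hν]
  rw [show ε * (a^3/ν^3) * (M₀*(M₀+ν*M₁)^2) = (ε * a^3 * (M₀*(M₀+ν*M₁)^2))/ν^3 by ring,
    le_div_iff₀ (by positivity)]
  have hk2 : ν^3*(a^2/2 + ν*a - ν^2*((1-ε)*(2-ε))) ≤ a^3*ν^2 := by nlinarith [hkey, sq_nonneg ν]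
  have hM₁2 : (0:ℝ) ≤ M₀*M₁^2 := by positivity
  have hk3 := mul_le_mul_of_nonneg_left hk2 hM₁2
  have hk4 : ν^3*(M₀*(M₀*(M₀+ν*M₁))) ≤ a^3*(M₀^3 + 2*ν*M₀^2*M₁) := by
    nlinarith [mul_le_mul_of_nonneg_left hν3 (by positivity : (0:ℝ) ≤ M₀^3),
      mul_le_mul_of_nonneg_left hν4 (by positivity : (0:ℝ) ≤ M₀^2*M₁),
      mul_nonneg (mul_nonneg (mul_nonneg (pow_nonneg (hν.trans hνa).le 3) hν.le) (mul_nonneg hM₀ hM₀)) hM₁]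
  nlinarith [hk3, hk4, mul_pos hε0 hε0]
/-- failure of multiplicativity of the truncated Laplace transform is
exponentially small: if uhat is analytic on the disc of radius 1/K₁ with uhat(0) = 0,
K' > K₁ > 0 and 0 < ν < 1/K', then with L = (1/ν)∫₀^{1/K'} e^{-z/ν} uhat(z) dz and
T = ∫∫∫_{D_{K'}} e^{-(z₁+z₂+z₃)/ν} uhat'(z₁)uhat'(z₂)uhat(z₃), where
D_{K'} = {z₁,z₂,z₃ > 0 : z₁+z₂+z₃ < 1/K'}, one has
|(1/ν)T - L³| ≤ e^{-1/(K'ν)}/(K'ν)³ · M₀(M₀ + νM₁)², with M₀, M₁ bounds for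
|uhat| and |uhat'| on (0,1/K'). -/
theorem stmt_19 (K₁ K' ν : ℝ) (hK₁ : 0 < K₁) (hK : K₁ < K') (hν : 0 < ν)
    (hνK : ν < 1 / K') (uhat : ℂ → ℂ)
    (hanal : DifferentiableOn ℂ uhat (Metric.ball 0 (1 / K₁))) (h0 : uhat 0 = 0)
    (M₀ M₁ : ℝ)
    (hM₀ : ∀ z ∈ Set.Ioo (0 : ℝ) (1 / K'), ‖uhat z‖ ≤ M₀)
    (hM₁ : ∀ z ∈ Set.Ioo (0 : ℝ) (1 / K'), ‖deriv uhat z‖ ≤ M₁) :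
    ‖((1 / (ν : ℂ)) *
            (∫ z₁ in (0 : ℝ)..(1 / K'), ∫ z₂ in (0 : ℝ)..(1 / K' - z₁),
              ∫ z₃ in (0 : ℝ)..(1 / K' - z₁ - z₂),
                (Real.exp (-(z₁ + z₂ + z₃) / ν) : ℂ) *
                  deriv uhat z₁ * deriv uhat z₂ * uhat z₃) -
          ((1 / (ν : ℂ)) *
              ∫ z in (0 : ℝ)..(1 / K'), (Real.exp (-z / ν) : ℂ) * uhat z) ^ 3)‖ ≤
      Real.exp (-(1 / (K' * ν))) / (K' * ν) ^ 3 * M₀ * (M₀ + ν * M₁) ^ 2 := by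
  have hK' : 0 < K' := hK₁.trans hK
  set a : ℝ := 1 / K' with ha_def
  have ha0 : 0 < a := by positivity
  have haK : a < 1 / K₁ := by
    rw [ha_def]
    exact one_div_lt_one_div_of_lt hK₁ hK
  have hνa : ν < a := hνK
  have hmem : ∀ x : ℝ, x ∈ Set.Icc 0 a → (x : ℂ) ∈ Metric.ball (0 : ℂ) (1 / K₁) := by
    intro x hx
    rw [Metric.mem_ball, dist_zero_right, Complex.norm_real, Real.norm_eq_abs,
      abs_of_nonneg hx.1]
    exact lt_of_le_of_lt hx.2 haK
  -- clamp to [0, a]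
  set p : ℝ → ℝ := fun x => max 0 (min x a) with hp_def
  have hp_cont : Continuous p := continuous_const.max (continuous_id.min continuous_const)
  have hp_mem : ∀ x, p x ∈ Set.Icc 0 a :=
    fun x => ⟨le_max_left _ _, max_le ha0.le (min_le_right _ _)⟩
  have hp_eq : ∀ x ∈ Set.Icc (0:ℝ) a, p x = x := by
    intro x hx
    simp only [hp_def, min_eq_left hx.2, max_eq_right hx.1]
  -- analyticity and continuity of the clamped functions
  have hAnal : AnalyticOnNhd ℂ uhat (Metric.ball 0 (1 / K₁)) :=
    hanal.analyticOnNhd Metric.isOpen_ball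
  have hu_clamp : Continuous (fun x : ℝ => uhat (p x)) :=
    hanal.continuousOn.comp_continuous (Complex.continuous_ofReal.comp hp_cont)
      (fun x => hmem _ (hp_mem x))
  have hdu_clamp : Continuous (fun x : ℝ => deriv uhat (p x)) :=
    hAnal.deriv.continuousOn.comp_continuous (Complex.continuous_ofReal.comp hp_cont)
      (fun x => hmem _ (hp_mem x))
  -- the exponential weight
  set E : ℝ → ℝ := fun x => Real.exp (-x / ν) with hE_def
  have hEx : ∀ x, E x = Real.exp (-x / ν) := fun x => rfl
  have hE_cont : Continuous E := Real.continuous_exp.comp (by continuity)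
  have hE_pos : ∀ x, 0 < E x := fun x => Real.exp_pos _
  have hE_le_one : ∀ x, 0 ≤ x → E x ≤ 1 := by
    intro x hx
    rw [hEx]
    apply Real.exp_le_one_iff.2
    rw [neg_div, neg_nonpos]
    positivity
  have hE_anti : ∀ {x y : ℝ}, x ≤ y → E y ≤ E x := by
    intro x y h
    simp only [hE_def]
    apply Real.exp_le_exp.2
    rw [neg_div, neg_div, neg_le_neg_iff]
    gcongr
  have hEE : ∀ s t : ℝ, E s * E (t - s) = E t := by
    intro s t
    simp only [hE_def]
    rw [← Real.exp_add]
    congr 1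
    field_simp
    ring
  -- uniform bounds on the closed interval, via closure
  have hM₀' : ∀ x, ‖uhat (p x)‖ ≤ M₀ := by
    have hsub : closure (Set.Ioo (0:ℝ) a) ⊆ {x : ℝ | ‖uhat (p x)‖ ≤ M₀} := by
      apply closure_minimal
      · intro x hx
        simp only [Set.mem_setOf_eq, hp_eq x (Set.Ioo_subset_Icc_self hx)]
        exact hM₀ x hx
      · exact isClosed_le (continuous_norm.comp hu_clamp) continuous_const
    intro x
    have h1 : p x ∈ closure (Set.Ioo (0:ℝ) a) := by
      rw [closure_Ioo (ne_of_lt ha0)]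
      exact hp_mem x
    have h2 := hsub h1
    simp only [Set.mem_setOf_eq] at h2
    rwa [hp_eq _ (hp_mem x)] at h2
  have hM₁' : ∀ x, ‖deriv uhat (p x)‖ ≤ M₁ := by
    have hsub : closure (Set.Ioo (0:ℝ) a) ⊆ {x : ℝ | ‖deriv uhat (p x)‖ ≤ M₁} := by
      apply closure_minimal
      · intro x hx
        simp only [Set.mem_setOf_eq, hp_eq x (Set.Ioo_subset_Icc_self hx)]
        exact hM₁ x hx
      · exact isClosed_le (continuous_norm.comp hdu_clamp) continuous_const
    intro x
    have h1 : p x ∈ closure (Set.Ioo (0:ℝ) a) := by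
      rw [closure_Ioo (ne_of_lt ha0)]
      exact hp_mem x
    have h2 := hsub h1
    simp only [Set.mem_setOf_eq] at h2
    rwa [hp_eq _ (hp_mem x)] at h2
  have hM₀0 : 0 ≤ M₀ := le_trans (norm_nonneg _) (hM₀' 0)
  have hM₁0 : 0 ≤ M₁ := le_trans (norm_nonneg _) (hM₁' 0)
  -- the clamped integrands
  set fC : ℝ → ℂ := fun x => (E x : ℂ) * uhat (p x) with hfC_def
  set gC : ℝ → ℂ := fun x => (E x : ℂ) * deriv uhat (p x) with hgC_def
  have hfC_cont : Continuous fC := (Complex.continuous_ofReal.comp hE_cont).mul hu_clamp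
  have hgC_cont : Continuous gC := (Complex.continuous_ofReal.comp hE_cont).mul hdu_clamp
  have hfCb : ∀ x, ‖fC x‖ ≤ M₀ * E x := by
    intro x
    simp only [hfC_def]
    rw [norm_mul, Complex.norm_real, Real.norm_eq_abs, abs_of_pos (hE_pos x), mul_comm M₀]
    exact mul_le_mul_of_nonneg_left (by exact hM₀' x) (hE_pos x).le
  have hgCb : ∀ x, ‖gC x‖ ≤ M₁ * E x := by
    intro x
    simp only [hgC_def]
    rw [norm_mul, Complex.norm_real, Real.norm_eq_abs, abs_of_pos (hE_pos x), mul_comm M₁]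
    exact mul_le_mul_of_nonneg_left (by exact hM₁' x) (hE_pos x).le
  -- primitives and the main integrals
  set J : ℝ → ℂ := fun b => ∫ x in (0:ℝ)..b, fC x with hJ_def
  have hJ_cont : Continuous J :=
    intervalIntegral.continuous_primitive (fun _ _ => hfC_cont.intervalIntegrable _ _) 0
  set I₀ : ℂ := J a with hI₀_def
  set I₁ : ℂ := ∫ x in (0:ℝ)..a, gC x with hI₁_def
  set Inn : ℝ → ℂ := fun z₁ => ∫ z₂ in (0:ℝ)..(a - z₁), gC z₂ * J (a - z₁ - z₂) with hInn_def
  have hInn_cont : Continuous Inn := by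
    apply intervalIntegral.continuous_parametric_intervalIntegral_of_continuous
      (f := fun z₁ z₂ => gC z₂ * J (a - z₁ - z₂)) (s := fun z₁ => a - z₁)
    · exact (hgC_cont.comp continuous_snd).mul
        (hJ_cont.comp ((continuous_const.sub continuous_fst).sub continuous_snd))
    · exact continuous_const.sub continuous_id
  -- rewriting the triple integral
  have hT : (∫ z₁ in (0 : ℝ)..a, ∫ z₂ in (0 : ℝ)..(a - z₁), ∫ z₃ in (0 : ℝ)..(a - z₁ - z₂),
        (Real.exp (-(z₁ + z₂ + z₃) / ν) : ℂ) * deriv uhat z₁ * deriv uhat z₂ * uhat z₃)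
      = ∫ z₁ in (0:ℝ)..a, gC z₁ * Inn z₁ := by
    apply intervalIntegral.integral_congr
    intro z₁ hz₁
    rw [Set.uIcc_of_le ha0.le] at hz₁
    have hz₁a : 0 ≤ a - z₁ := by linarith [hz₁.2]
    simp only [hInn_def]
    rw [← intervalIntegral.integral_const_mul]
    apply intervalIntegral.integral_congr
    intro z₂ hz₂
    rw [Set.uIcc_of_le hz₁a] at hz₂
    have hz₃a : 0 ≤ a - z₁ - z₂ := by linarith [hz₂.2]
    show (∫ z₃ in (0:ℝ)..(a - z₁ - z₂),
        (Real.exp (-(z₁ + z₂ + z₃) / ν) : ℂ) * deriv uhat z₁ * deriv uhat z₂ * uhat z₃)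
      = gC z₁ * (gC z₂ * J (a - z₁ - z₂))
    have hrw : gC z₁ * (gC z₂ * J (a - z₁ - z₂)) = (gC z₁ * gC z₂) * J (a - z₁ - z₂) := by ring
    rw [hrw]
    simp only [hJ_def]
    rw [← intervalIntegral.integral_const_mul]
    apply intervalIntegral.integral_congr
    intro z₃ hz₃
    rw [Set.uIcc_of_le hz₃a] at hz₃
    have h1 : p z₁ = z₁ := hp_eq _ ⟨hz₁.1, hz₁.2⟩
    have h2 : p z₂ = z₂ := hp_eq _ ⟨hz₂.1, by linarith [hz₂.2, hz₁.1]⟩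
    have h3 : p z₃ = z₃ := hp_eq _ ⟨hz₃.1, by linarith [hz₃.2, hz₂.1, hz₁.1]⟩
    simp only [hgC_def, hfC_def, hE_def, h1, h2, h3]
    rw [show -(z₁ + z₂ + z₃) / ν = -z₁/ν + (-z₂/ν + -z₃/ν) by ring, Real.exp_add, Real.exp_add]
    push_cast
    ring
  -- rewriting the simple Laplace integral
  have hL : (∫ z in (0:ℝ)..a, (Real.exp (-z / ν) : ℂ) * uhat z) = I₀ := by
    rw [hI₀_def]
    simp only [hJ_def]
    apply intervalIntegral.integral_congr
    intro z hz
    rw [Set.uIcc_of_le ha0.le] at hz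
    simp only [hfC_def, hE_def, hp_eq z hz]
  -- integration by parts
  have hIBP : I₁ - (1/(ν:ℂ)) * I₀ = ((E a : ℝ) : ℂ) * uhat (a:ℝ) := by
    have hD : ∀ x ∈ Set.uIcc (0:ℝ) a, HasDerivAt (fun y : ℝ => ((Real.exp (-y/ν) : ℝ) : ℂ) * uhat (y:ℂ))
        (((Real.exp (-x/ν):ℝ):ℂ) * deriv uhat x - (1/(ν:ℂ)) * (((Real.exp (-x/ν):ℝ):ℂ) * uhat x)) x := by
      intro x hx
      rw [Set.uIcc_of_le ha0.le] at hx
      have hdiff : DifferentiableAt ℂ uhat (x:ℂ) :=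
        hanal.differentiableAt (Metric.isOpen_ball.mem_nhds (hmem x hx))
      have h1 : HasDerivAt (fun y : ℝ => uhat (y:ℂ)) (deriv uhat x) x :=
        hdiff.hasDerivAt.comp_ofReal
      have h2r : HasDerivAt (fun y : ℝ => Real.exp (-y/ν)) (Real.exp (-x/ν) * (-1/ν)) x := by
        have hlin : HasDerivAt (fun y : ℝ => -y/ν) (-1/ν) x := by
          simpa using ((hasDerivAt_id x).neg.div_const ν)
        exact hlin.exp
      have h2 : HasDerivAt (fun y : ℝ => ((Real.exp (-y/ν) : ℝ) : ℂ))
          (((Real.exp (-x/ν) * (-1/ν) : ℝ)):ℂ) x := h2r.ofReal_comp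
      have h3 := h2.mul h1
      have hν' : (ν:ℂ) ≠ 0 := Complex.ofReal_ne_zero.2 (ne_of_gt hν)
      have hval : ((Real.exp (-x/ν) * (-1/ν) : ℝ):ℂ) * uhat (x:ℂ) + ((Real.exp (-x/ν):ℝ):ℂ) * deriv uhat x
          = ((Real.exp (-x/ν):ℝ):ℂ) * deriv uhat x - (1/(ν:ℂ)) * (((Real.exp (-x/ν):ℝ):ℂ) * uhat x) := by
        push_cast
        field_simp
        ring
      rw [hval] at h3
      exact h3
    have hcd : ContinuousOn (fun x : ℝ => deriv uhat (x:ℂ)) (Set.uIcc (0:ℝ) a) := by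
      rw [Set.uIcc_of_le ha0.le]
      exact (hAnal.deriv.continuousOn).comp Complex.continuous_ofReal.continuousOn
        (fun x hx => hmem x hx)
    have hcu : ContinuousOn (fun x : ℝ => uhat (x:ℂ)) (Set.uIcc (0:ℝ) a) := by
      rw [Set.uIcc_of_le ha0.le]
      exact hanal.continuousOn.comp Complex.continuous_ofReal.continuousOn
        (fun x hx => hmem x hx)
    have hce : ContinuousOn (fun x : ℝ => ((Real.exp (-x/ν):ℝ):ℂ)) (Set.uIcc (0:ℝ) a) :=
      (Complex.continuous_ofReal.comp (Real.continuous_exp.comp (by continuity))).continuousOn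
    have hcont : ContinuousOn (fun x : ℝ =>
        ((Real.exp (-x/ν):ℝ):ℂ) * deriv uhat x - (1/(ν:ℂ)) * (((Real.exp (-x/ν):ℝ):ℂ) * uhat x))
        (Set.uIcc (0:ℝ) a) :=
      (hce.mul hcd).sub (continuousOn_const.mul (hce.mul hcu))
    have hFTC := intervalIntegral.integral_eq_sub_of_hasDerivAt hD
      (hcont.intervalIntegrable)
    have hlhs : (∫ x in (0:ℝ)..a,
        (((Real.exp (-x/ν):ℝ):ℂ) * deriv uhat x - (1/(ν:ℂ)) * (((Real.exp (-x/ν):ℝ):ℂ) * uhat x)))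
        = I₁ - (1/(ν:ℂ)) * I₀ := by
      have hcongr : (∫ x in (0:ℝ)..a,
          (((Real.exp (-x/ν):ℝ):ℂ) * deriv uhat x - (1/(ν:ℂ)) * (((Real.exp (-x/ν):ℝ):ℂ) * uhat x)))
          = ∫ x in (0:ℝ)..a, (gC x - (1/(ν:ℂ)) * fC x) := by
        apply intervalIntegral.integral_congr
        intro x hx
        rw [Set.uIcc_of_le ha0.le] at hx
        simp only [hgC_def, hfC_def, hE_def, hp_eq x hx]
      rw [hcongr, intervalIntegral.integral_sub (f := gC) (g := fun x => 1/(ν:ℂ) * fC x) (hgC_cont.intervalIntegrable _ _)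
        ((continuous_const.mul hfC_cont).intervalIntegrable _ _),
        intervalIntegral.integral_const_mul, hI₁_def, hI₀_def]
    rw [hlhs] at hFTC
    rw [hFTC]
    have h00 : ((0:ℝ):ℂ) = (0:ℂ) := by norm_num
    simp only [hE_def]
    rw [h00, h0]
    norm_num
  -- basic norm bounds
  have hI₀b : ‖I₀‖ ≤ M₀ * (ν * (1 - E a)) := by
    have h := normBound ν hν fC hfC_cont M₀ 0 a ha0.le
      (by intro x; rw [← hEx x]; exact hfCb x)
    have h1 : Real.exp (-(0:ℝ)/ν) = 1 := by norm_num
    rw [h1, ← hEx a] at h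
    rw [hI₀_def]
    simp only [hJ_def]
    exact h
  have hI₁b : ‖I₁‖ ≤ M₁ * (ν * (1 - E a)) := by
    have h := normBound ν hν gC hgC_cont M₁ 0 a ha0.le
      (by intro x; rw [← hEx x]; exact hgCb x)
    have h1 : Real.exp (-(0:ℝ)/ν) = 1 := by norm_num
    rw [h1, ← hEx a] at h
    rw [hI₁_def]
    exact h
  have hJb : ∀ b ∈ Set.Icc (0:ℝ) a, ‖J b - I₀‖ ≤ M₀ * (ν * (E b - E a)) := by
    intro b hb
    have hsub : J b - I₀ = -∫ x in b..a, fC x := by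
      rw [hI₀_def]
      simp only [hJ_def]
      rw [← intervalIntegral.integral_symm]
      exact intervalIntegral.integral_interval_sub_left (hfC_cont.intervalIntegrable _ _)
        (hfC_cont.intervalIntegrable _ _)
    rw [hsub, norm_neg]
    have h := normBound ν hν fC hfC_cont M₀ b a hb.2
      (by intro x; rw [← hEx x]; exact hfCb x)
    rwa [← hEx b, ← hEx a] at h
  have hJ₁b : ∀ b ∈ Set.Icc (0:ℝ) a, ‖(∫ x in (0:ℝ)..b, gC x) - I₁‖ ≤ M₁ * (ν * (E b - E a)) := by
    intro b hb
    have hsub : (∫ x in (0:ℝ)..b, gC x) - I₁ = -∫ x in b..a, gC x := by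
      rw [hI₁_def, ← intervalIntegral.integral_symm]
      exact intervalIntegral.integral_interval_sub_left (hgC_cont.intervalIntegrable _ _)
        (hgC_cont.intervalIntegrable _ _)
    rw [hsub, norm_neg]
    have h := normBound ν hν gC hgC_cont M₁ b a hb.2
      (by intro x; rw [← hEx x]; exact hgCb x)
    rwa [← hEx b, ← hEx a] at h
  have hIntE : ∀ b : ℝ, ∫ x in (0:ℝ)..b, E x = ν * (1 - E b) := by
    intro b
    have h := expE ν 0 b hν
    have h1 : Real.exp (-(0:ℝ)/ν) = 1 := by norm_num
    rw [h1, ← hEx b] at h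
    calc ∫ x in (0:ℝ)..b, E x = ∫ x in (0:ℝ)..b, Real.exp (-x/ν) := by
          apply intervalIntegral.integral_congr
          intro x _
          rw [hEx]
    _ = ν * (1 - E b) := h
  -- middle estimate
  have hMid : ∀ z₁ ∈ Set.Icc (0:ℝ) a, ‖Inn z₁ - I₁ * I₀‖
      ≤ M₀*M₁*ν*((a - z₁)*E (a - z₁) - E a*(ν*(1 - E (a - z₁))) + ν*((1-E a)*(E (a - z₁) - E a))) := by
    intro z₁ hz₁
    have hb : a - z₁ ∈ Set.Icc (0:ℝ) a := ⟨by linarith [hz₁.2], by linarith [hz₁.1]⟩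
    have hdec : Inn z₁ - I₁ * I₀ = (∫ z₂ in (0:ℝ)..(a - z₁), gC z₂ * (J (a - z₁ - z₂) - I₀))
        + ((∫ z₂ in (0:ℝ)..(a - z₁), gC z₂) - I₁) * I₀ := by
      have cJd : Continuous (fun z₂ : ℝ => gC z₂ * J (a - z₁ - z₂)) :=
        hgC_cont.mul (hJ_cont.comp (continuous_const.sub continuous_id))
      have cJm : Continuous (fun z₂ : ℝ => gC z₂ * I₀) := hgC_cont.mul continuous_const
      have e1 : ∫ z₂ in (0:ℝ)..(a - z₁), gC z₂ * (J (a - z₁ - z₂) - I₀)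
          = (∫ z₂ in (0:ℝ)..(a - z₁), gC z₂ * J (a - z₁ - z₂)) - (∫ z₂ in (0:ℝ)..(a - z₁), gC z₂) * I₀ := by
        rw [← intervalIntegral.integral_mul_const,
          ← intervalIntegral.integral_sub (cJd.intervalIntegrable _ _) (cJm.intervalIntegrable _ _)]
        apply intervalIntegral.integral_congr
        intro z₂ _
        ring
      simp only [hInn_def]
      rw [e1]
      ring
    rw [hdec]
    have hbd1 : ‖∫ z₂ in (0:ℝ)..(a - z₁), gC z₂ * (J (a - z₁ - z₂) - I₀)‖
        ≤ M₀*M₁*ν*((a - z₁)*E (a - z₁) - E a*(ν*(1 - E (a - z₁)))) := by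
      calc ‖∫ z₂ in (0:ℝ)..(a - z₁), gC z₂ * (J (a - z₁ - z₂) - I₀)‖
          ≤ ∫ z₂ in (0:ℝ)..(a - z₁), ‖gC z₂ * (J (a - z₁ - z₂) - I₀)‖ :=
            intervalIntegral.norm_integral_le_integral_norm hb.1
      _ ≤ ∫ z₂ in (0:ℝ)..(a - z₁), (M₀*M₁*ν) * (E (a - z₁) - E a * E z₂) := by
          have cJd : Continuous (fun z₂ : ℝ => gC z₂ * (J (a - z₁ - z₂) - I₀)) :=
            hgC_cont.mul ((hJ_cont.comp (continuous_const.sub continuous_id)).sub continuous_const)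
          have cdom : Continuous (fun z₂ : ℝ => (M₀*M₁*ν) * (E (a - z₁) - E a * E z₂)) :=
            continuous_const.mul (continuous_const.sub (continuous_const.mul hE_cont))
          apply intervalIntegral.integral_mono_on hb.1
            (cJd.norm.intervalIntegrable _ _) (cdom.intervalIntegrable _ _)
          intro z₂ hz₂
          rw [norm_mul]
          have hm : a - z₁ - z₂ ∈ Set.Icc (0:ℝ) a := ⟨by linarith [hz₂.2], by linarith [hz₂.1, hb.2]⟩
          have h1 := mul_le_mul (hgCb z₂) (hJb _ hm) (norm_nonneg _) (by positivity)
          refine le_trans h1 (le_of_eq ?_)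
          have hee : E z₂ * E (a - z₁ - z₂) = E (a - z₁) := hEE z₂ (a - z₁)
          calc M₁ * E z₂ * (M₀ * (ν * (E (a - z₁ - z₂) - E a)))
              = M₀*M₁*ν * (E z₂ * E (a - z₁ - z₂) - E a * E z₂) := by ring
          _ = M₀*M₁*ν * (E (a - z₁) - E a * E z₂) := by rw [hee]
      _ = M₀*M₁*ν*((a - z₁)*E (a - z₁) - E a*(ν*(1 - E (a - z₁)))) := by
          rw [intervalIntegral.integral_const_mul,
            intervalIntegral.integral_sub (g := fun x => E a * E x) (intervalIntegrable_const)
              ((continuous_const.mul hE_cont).intervalIntegrable _ _),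
            intervalIntegral.integral_const, intervalIntegral.integral_const_mul, hIntE]
          simp only [smul_eq_mul, sub_zero]
          try ring
    have hbd2 : ‖((∫ z₂ in (0:ℝ)..(a - z₁), gC z₂) - I₁) * I₀‖
        ≤ (M₁ * (ν * (E (a - z₁) - E a))) * (M₀ * (ν * (1 - E a))) := by
      rw [norm_mul]
      exact mul_le_mul (hJ₁b _ hb) hI₀b (norm_nonneg _)
        (mul_nonneg hM₁0 (mul_nonneg hν.le (sub_nonneg.2 (hE_anti hb.2))))
    calc ‖(∫ z₂ in (0:ℝ)..(a - z₁), gC z₂ * (J (a - z₁ - z₂) - I₀))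
        + ((∫ z₂ in (0:ℝ)..(a - z₁), gC z₂) - I₁) * I₀‖
        ≤ ‖∫ z₂ in (0:ℝ)..(a - z₁), gC z₂ * (J (a - z₁ - z₂) - I₀)‖
          + ‖((∫ z₂ in (0:ℝ)..(a - z₁), gC z₂) - I₁) * I₀‖ := norm_add_le _ _
    _ ≤ M₀*M₁*ν*((a - z₁)*E (a - z₁) - E a*(ν*(1 - E (a - z₁))))
          + (M₁ * (ν * (E (a - z₁) - E a))) * (M₀ * (ν * (1 - E a))) := add_le_add hbd1 hbd2
    _ = M₀*M₁*ν*((a - z₁)*E (a - z₁) - E a*(ν*(1 - E (a - z₁))) + ν*((1-E a)*(E (a - z₁) - E a))) := by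
        ring
  -- outer estimate
  have houter : ‖(∫ z₁ in (0:ℝ)..a, gC z₁ * Inn z₁) - I₁ * (I₁ * I₀)‖
      ≤ M₀*M₁^2*ν*(E a*(a^2/2 + ν*a - ν^2*((1-E a)*(2-E a)))) := by
    have hEa' : Continuous (fun z₁ : ℝ => E (a - z₁)) :=
      hE_cont.comp (continuous_const.sub continuous_id)
    have hφ_cont : Continuous (fun z₁ : ℝ =>
        M₀*M₁*ν*((a - z₁)*E (a - z₁) - E a*(ν*(1 - E (a - z₁))) + ν*((1-E a)*(E (a - z₁) - E a)))) :=
      continuous_const.mul ((((continuous_const.sub continuous_id).mul hEa').sub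
        (continuous_const.mul (continuous_const.mul (continuous_const.sub hEa')))).add
        (continuous_const.mul (continuous_const.mul (hEa'.sub continuous_const))))
    have hdec : (∫ z₁ in (0:ℝ)..a, gC z₁ * Inn z₁) - I₁ * (I₁ * I₀)
        = ∫ z₁ in (0:ℝ)..a, gC z₁ * (Inn z₁ - I₁ * I₀) := by
      have e1 : I₁ * (I₁ * I₀) = ∫ z₁ in (0:ℝ)..a, gC z₁ * (I₁ * I₀) := by
        rw [intervalIntegral.integral_mul_const]
      rw [e1, ← intervalIntegral.integral_sub (f := fun z₁ => gC z₁ * Inn z₁) (g := fun z₁ => gC z₁ * (I₁ * I₀)) ((hgC_cont.mul hInn_cont).intervalIntegrable _ _)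
        ((hgC_cont.mul continuous_const).intervalIntegrable _ _)]
      apply intervalIntegral.integral_congr
      intro z₁ _
      ring
    rw [hdec]
    calc ‖∫ z₁ in (0:ℝ)..a, gC z₁ * (Inn z₁ - I₁ * I₀)‖
        ≤ ∫ z₁ in (0:ℝ)..a, ‖gC z₁ * (Inn z₁ - I₁ * I₀)‖ :=
          intervalIntegral.norm_integral_le_integral_norm ha0.le
    _ ≤ ∫ z₁ in (0:ℝ)..a, (M₁ * E z₁) *
          (M₀*M₁*ν*((a - z₁)*E (a - z₁) - E a*(ν*(1 - E (a - z₁))) + ν*((1-E a)*(E (a - z₁) - E a)))) := by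
        apply intervalIntegral.integral_mono_on ha0.le
          ((hgC_cont.mul (hInn_cont.sub continuous_const)).norm.intervalIntegrable _ _)
          (((continuous_const.mul hE_cont).mul hφ_cont).intervalIntegrable _ _)
        intro z₁ hz₁
        simp only [Pi.mul_apply, Pi.sub_apply]
        rw [norm_mul]
        exact mul_le_mul (hgCb z₁) (hMid z₁ hz₁) (norm_nonneg _)
          (mul_nonneg hM₁0 (hE_pos z₁).le)
    _ = ∫ z₁ in (0:ℝ)..a, (M₀*M₁^2*ν) *
          ((a - z₁)*E a - E a*(ν*(E z₁ - E a)) + ν*((1-E a)*(E a - E a * E z₁))) := by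
        apply intervalIntegral.integral_congr
        intro z₁ hz₁
        rw [Set.uIcc_of_le ha0.le] at hz₁
        show (M₁ * E z₁) * (M₀*M₁*ν*((a - z₁)*E (a - z₁) - E a*(ν*(1 - E (a - z₁))) + ν*((1-E a)*(E (a - z₁) - E a))))
          = (M₀*M₁^2*ν) * ((a - z₁)*E a - E a*(ν*(E z₁ - E a)) + ν*((1-E a)*(E a - E a * E z₁)))
        have hee : E z₁ * E (a - z₁) = E a := hEE z₁ a
        have hEne : E z₁ ≠ 0 := ne_of_gt (hE_pos z₁)
        have hdiv : E (a - z₁) = E a / E z₁ := by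
          rw [eq_div_iff hEne, mul_comm]
          exact hee
        rw [hdiv]
        field_simp
    _ = M₀*M₁^2*ν*(E a*(a^2/2 + ν*a - ν^2*((1-E a)*(2-E a)))) := by
        rw [intervalIntegral.integral_const_mul]
        have i1 : ∫ z₁ in (0:ℝ)..a, (a - z₁) = a^2/2 := by
          rw [intervalIntegral.integral_sub (intervalIntegrable_const)
            (intervalIntegral.intervalIntegrable_id), intervalIntegral.integral_const,
            integral_id]
          simp
          ring
        have i2 : ∫ z₁ in (0:ℝ)..a, E z₁ = ν * (1 - E a) := hIntE a
        have hsplit : ∫ z₁ in (0:ℝ)..a,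
            ((a - z₁)*E a - E a*(ν*(E z₁ - E a)) + ν*((1-E a)*(E a - E a * E z₁)))
            = (∫ z₁ in (0:ℝ)..a, (a - z₁)) * E a
              - E a * ν * ((∫ z₁ in (0:ℝ)..a, E z₁) - a * E a)
              + ν*(1-E a)*(a * E a - E a * (∫ z₁ in (0:ℝ)..a, E z₁)) := by
          have c1 : Continuous (fun z₁ : ℝ => (a - z₁)*E a) :=
            (continuous_const.sub continuous_id).mul continuous_const
          have c2 : Continuous (fun z₁ : ℝ => E a*(ν*(E z₁ - E a))) :=
            continuous_const.mul (continuous_const.mul (hE_cont.sub continuous_const))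
          have c3 : Continuous (fun z₁ : ℝ => ν*((1-E a)*(E a - E a * E z₁))) :=
            continuous_const.mul (continuous_const.mul (continuous_const.sub (continuous_const.mul hE_cont)))
          rw [intervalIntegral.integral_add (f := fun z₁ => (a - z₁)*E a - E a*(ν*(E z₁ - E a))) (g := fun z₁ => ν*((1-E a)*(E a - E a * E z₁))) ((c1.sub c2).intervalIntegrable _ _)
            (c3.intervalIntegrable _ _),
            intervalIntegral.integral_sub (c1.intervalIntegrable _ _) (c2.intervalIntegrable _ _)]
          congr 1
          congr 1
          · rw [intervalIntegral.integral_mul_const]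
          · rw [intervalIntegral.integral_const_mul]
            have : ∫ z₁ in (0:ℝ)..a, ν*(E z₁ - E a)
                = ν * ((∫ z₁ in (0:ℝ)..a, E z₁) - a * E a) := by
              rw [intervalIntegral.integral_const_mul,
                intervalIntegral.integral_sub (hE_cont.intervalIntegrable _ _)
                  (intervalIntegrable_const), intervalIntegral.integral_const]
              simp [smul_eq_mul]
            rw [this]
            ring
          · rw [intervalIntegral.integral_const_mul, intervalIntegral.integral_const_mul,
              intervalIntegral.integral_sub (g := fun z₁ => E a * E z₁) (intervalIntegrable_const)
                ((continuous_const.mul hE_cont).intervalIntegrable _ _),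
              intervalIntegral.integral_const, intervalIntegral.integral_const_mul]
            simp [smul_eq_mul]
            ring
        rw [hsplit, i1, i2]
        ring
  -- the boundary (integration-by-parts) term
  have hua : ‖uhat (a:ℝ)‖ ≤ M₀ := by
    have := hM₀' a
    rwa [hp_eq a ⟨ha0.le, le_refl a⟩] at this
  have hAterm : ‖(1/(ν:ℂ)) * (I₁ * (I₁ * I₀)) - ((1/(ν:ℂ)) * I₀)^3‖
      ≤ E a * (M₀ * (M₀ * (M₀ + ν*M₁))) := by
    have hfac : (1/(ν:ℂ)) * (I₁ * (I₁ * I₀)) - ((1/(ν:ℂ)) * I₀)^3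
        = (I₁ - (1/(ν:ℂ)) * I₀) * ((I₁ + (1/(ν:ℂ))*I₀) * ((1/(ν:ℂ)) * I₀)) := by
      ring
    have hLc : ‖(1/(ν:ℂ)) * I₀‖ ≤ M₀ := by
      have hcast : (1/(ν:ℂ)) = (((1/ν : ℝ)):ℂ) := by push_cast; ring
      rw [norm_mul, hcast, Complex.norm_real, Real.norm_eq_abs, abs_of_pos (by positivity)]
      calc (1/ν) * ‖I₀‖ ≤ (1/ν) * (M₀ * (ν * (1 - E a))) := by
            apply mul_le_mul_of_nonneg_left hI₀b (by positivity)
      _ = M₀ * (1 - E a) := by field_simp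
      _ ≤ M₀ := by
        have := mul_le_of_le_one_right hM₀0 (by linarith [hE_pos a] : (1:ℝ) - E a ≤ 1)
        simpa using this
    have hI₁b' : ‖I₁‖ ≤ ν * M₁ := by
      apply le_trans hI₁b
      calc M₁ * (ν * (1 - E a)) = (M₁*ν)*(1-E a) := by ring
      _ ≤ M₁*ν := mul_le_of_le_one_right (by positivity) (by linarith [hE_pos a])
      _ = ν*M₁ := by ring
    have hcb : ‖((E a : ℝ):ℂ) * uhat (a:ℝ)‖ ≤ E a * M₀ := by
      rw [norm_mul, Complex.norm_real, Real.norm_eq_abs, abs_of_pos (hE_pos a)]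
      exact mul_le_mul_of_nonneg_left (by exact hua) (hE_pos a).le
    rw [hfac, hIBP]
    refine le_trans (norm_mul_le _ _) ?_
    have h2 : ‖(I₁ + (1/(ν:ℂ))*I₀) * ((1/(ν:ℂ)) * I₀)‖ ≤ (ν * M₁ + M₀) * M₀ := by
      refine le_trans (norm_mul_le _ _) ?_
      apply mul_le_mul _ hLc (norm_nonneg _) (by positivity)
      exact le_trans (norm_add_le _ _) (add_le_add hI₁b' hLc)
    calc ‖((E a : ℝ):ℂ) * uhat (a:ℝ)‖ * ‖(I₁ + (1/(ν:ℂ))*I₀) * ((1/(ν:ℂ)) * I₀)‖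
        ≤ (E a * M₀) * ((ν * M₁ + M₀) * M₀) :=
          mul_le_mul hcb h2 (norm_nonneg _) (by positivity)
    _ = E a * (M₀ * (M₀ * (M₀ + ν*M₁))) := by ring
  -- final assembly
  rw [hT, hL]
  have hRHS : Real.exp (-(1 / (K' * ν))) / (K' * ν) ^ 3 * M₀ * (M₀ + ν * M₁) ^ 2
      = Real.exp (-a/ν) * (a^3/ν^3) * (M₀*(M₀+ν*M₁)^2) := by
    rw [ha_def]
    have h1 : -(1 / (K' * ν)) = -(1/K')/ν := by
      field_simp
    rw [h1]
    have h2 : (K' * ν)^3 = K'^3 * ν^3 := by ring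
    rw [h2]
    field_simp
  rw [hRHS]
  have hstep : ‖(1/(ν:ℂ)) * (∫ z₁ in (0:ℝ)..a, gC z₁ * Inn z₁) - ((1/(ν:ℂ)) * I₀)^3‖
      ≤ (1/ν) * (M₀*M₁^2*ν*(E a*(a^2/2 + ν*a - ν^2*((1-E a)*(2-E a)))))
        + E a * (M₀ * (M₀ * (M₀ + ν*M₁))) := by
    have hsplit2 : (1/(ν:ℂ)) * (∫ z₁ in (0:ℝ)..a, gC z₁ * Inn z₁) - ((1/(ν:ℂ)) * I₀)^3
        = (1/(ν:ℂ)) * ((∫ z₁ in (0:ℝ)..a, gC z₁ * Inn z₁) - I₁ * (I₁ * I₀))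
          + ((1/(ν:ℂ)) * (I₁ * (I₁ * I₀)) - ((1/(ν:ℂ)) * I₀)^3) := by
      ring
    rw [hsplit2]
    apply le_trans (norm_add_le _ _)
    apply add_le_add _ hAterm
    rw [norm_mul]
    have hcast : (1/(ν:ℂ)) = (((1/ν : ℝ)):ℂ) := by push_cast; ring
    rw [hcast, Complex.norm_real, Real.norm_eq_abs, abs_of_pos (by positivity)]
    exact mul_le_mul_of_nonneg_left houter (by positivity)
  apply le_trans hstep
  have hclean : (1/ν) * (M₀*M₁^2*ν*(E a*(a^2/2 + ν*a - ν^2*((1-E a)*(2-E a)))))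
      = M₀*M₁^2*(E a*(a^2/2 + ν*a - ν^2*((1-E a)*(2-E a)))) := by
    field_simp
  rw [hclean]
  have hfin := auxFinal a ν M₀ M₁ hν hνa hM₀0 hM₁0
  simp only [hE_def]
  calc M₀*M₁^2*(Real.exp (-a/ν)*(a^2/2 + ν*a - ν^2*((1-Real.exp (-a/ν))*(2-Real.exp (-a/ν)))))
      + Real.exp (-a/ν) * (M₀ * (M₀ * (M₀ + ν*M₁)))
      = M₀*M₁^2*(Real.exp (-a/ν)*(a^2/2 + ν*a - ν^2*((1 - Real.exp (-a/ν))*(2 - Real.exp (-a/ν)))))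
      + Real.exp (-a/ν) * M₀ * (M₀ * (M₀ + ν*M₁)) := by ring
  _ ≤ Real.exp (-a/ν) * (a^3/ν^3) * (M₀*(M₀+ν*M₁)^2) := hfin
end
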